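/- arXiv:1806.04721 — 6 statements merged into one kernel-verified Lean document; each statement's English description precedes it below -/
import Mathlib

section
/- Let (G_n, δ_n)_{n∈ℕ} be a sequence of proper metric monoids with identity elements e_n. Then the set R((G_n,δ_n)_{n∈ℕ}) of regular sequences is a monoid under pointwise multiplication: the sequence (e_n)_{n∈ℕ} of identity elements is regular, and for any two regular sequences (g_n)_{n∈ℕ} and (g'_n)_{n∈ℕ}, the pointwise product (g_n g'_n)_{n∈ℕ} is again a regular sequence (in particular it is bounded). -/
/-- A sequence through a sequence of metric monoids is bounded when
`sup_n δ_n(e_n, g_n) < ∞`. -/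
def BoundedSeq {G : ℕ → Type*} [∀ n, Monoid (G n)] [∀ n, MetricSpace (G n)]
    (g : ∀ n, G n) : Prop :=
  ∃ M : ℝ, ∀ n, dist (1 : G n) (g n) ≤ M

/-- A bounded sequence is regular when the right translations by its terms are
asymptotically uniformly equicontinuous. -/
def RegularSeq {G : ℕ → Type*} [∀ n, Monoid (G n)] [∀ n, MetricSpace (G n)]
    (g : ∀ n, G n) : Prop :=
  BoundedSeq g ∧
    ∀ ε : ℝ, 0 < ε → ∃ ω : ℝ, 0 < ω ∧ ∃ N : ℕ, ∀ n, N ≤ n → ∀ h k : G n,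
      dist h k < ω → dist (h * g n) (k * g n) < ε

/-- For a sequence of proper metric monoids, the set of regular
sequences is a monoid under pointwise multiplication: the sequence of identity
elements is regular, and the pointwise product of two regular sequences is again
regular (in particular it is bounded). -/
theorem regularSequences_monoid
    (G : ℕ → Type*) [∀ n, Monoid (G n)] [∀ n, MetricSpace (G n)]
    (h_left : ∀ n, ∀ g h k : G n, dist (g * h) (g * k) = dist h k)
    (h_cont : ∀ n, Continuous fun p : G n × G n => p.1 * p.2)
    (h_proper : ∀ n, ProperSpace (G n)) :
    RegularSeq (fun n => (1 : G n)) ∧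
      ∀ g g' : ∀ n, G n, RegularSeq g → RegularSeq g' →
        (BoundedSeq fun n => g n * g' n) ∧ RegularSeq (fun n => g n * g' n) := by
  constructor
  · refine ⟨⟨0, fun n => by simp⟩, fun ε hε => ⟨ε, hε, 0, fun n _ h k hhk => by simpa using hhk⟩⟩
  · intro g g' hg hg'
    have hbd : BoundedSeq fun n => g n * g' n := by
      obtain ⟨⟨M, hM⟩, _⟩ := hg
      obtain ⟨⟨M', hM'⟩, _⟩ := hg'
      refine ⟨M + M', fun n => ?_⟩
      calc dist (1 : G n) (g n * g' n) ≤ dist (1 : G n) (g n) + dist (g n) (g n * g' n) :=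
            dist_triangle _ _ _
        _ ≤ M + M' := by
            have : dist (g n) (g n * g' n) = dist (1 : G n) (g' n) := by
              have := h_left n (g n) 1 (g' n); simpa using this
            rw [this]; exact add_le_add (hM n) (hM' n)
    refine ⟨hbd, hbd, fun ε hε => ?_⟩
    obtain ⟨ω', hω', N', hN'⟩ := hg'.2 ε hε
    obtain ⟨ω, hω, N, hN⟩ := hg.2 ω' hω'
    refine ⟨ω, hω, max N N', fun n hn h k hhk => ?_⟩
    have h1 := hN n (le_trans (le_max_left _ _) hn) h k hhk
    have h2 := hN' n (le_trans (le_max_right _ _) hn) (h * g n) (k * g n) h1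
    simpa [mul_assoc] using h2
end

section
/- Let (G_n, δ_n)_{n∈ℕ} be a sequence of proper metric monoids with identity elements e_n, and suppose for each n ∈ ℕ there are ε_n > 0 with Σ_{n=0}^∞ ε_n < ∞ and a (1/ε_n)-local ε_n-almost isometric isomorphism (ς_n, κ_n) from (G_n,δ_n) to (G_{n+1},δ_{n+1}). For k > n set ς_n^k = ς_{k-1} ∘ ⋯ ∘ ς_n, and let H_∞ be the set of regular sequences (g_n)_{n∈ℕ} such that for every ε > 0 there exists N ∈ ℕ with δ_j(g_j, ς_n^j(g_n)) < ε for all n ≥ N and all j > n. Then H_∞ is closed under pointwise multiplication: if (g_n)_{n∈ℕ} and (g'_n)_{n∈ℕ} belong to H_∞, then (g_n g'_n)_{n∈ℕ} belongs to H_∞. -/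
/-- `(ς, κ)` is an `r`-local `ε`-almost isometric isomorphism between the metric
monoids `G` and `H`. -/
def IsLocAlmostIsoIso {G H : Type*} [Monoid G] [MetricSpace G] [Monoid H] [MetricSpace H]
    (ς : G → H) (κ : H → G) (ε r : ℝ) : Prop :=
  ς 1 = 1 ∧ κ 1 = 1 ∧
    (∀ g ∈ Metric.closedBall (1 : G) r, ∀ g' ∈ Metric.closedBall (1 : G) r,
      ∀ h ∈ Metric.closedBall (1 : H) r,
        |dist (ς g * ς g') h - dist (g * g') (κ h)| ≤ ε) ∧
    (∀ g ∈ Metric.closedBall (1 : H) r, ∀ g' ∈ Metric.closedBall (1 : H) r,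
      ∀ h ∈ Metric.closedBall (1 : G) r,
        |dist (κ g * κ g') h - dist (g * g') (ς h)| ≤ ε)
/-- The compositions `ς_n^{n+k} = ς_{n+k-1} ∘ ⋯ ∘ ς_n`. -/
def compMap {G : ℕ → Type*} (ς : ∀ n, G n → G (n + 1)) (n : ℕ) :
    ∀ k : ℕ, G n → G (n + k)
  | 0 => fun g => g
  | k + 1 => fun g => ς (n + k) (compMap ς n k g)

/-- The map `ς_n^j = ς_{j-1} ∘ ⋯ ∘ ς_n : G_n → G_j` for `n ≤ j`. -/
def sigmaComp {G : ℕ → Type*} (ς : ∀ n, G n → G (n + 1)) {n j : ℕ} (h : n ≤ j)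
    (g : G n) : G j :=
  cast (congrArg G (Nat.add_sub_cancel' h)) (compMap ς n (j - n) g)

/-- Membership in `H_∞`: regular sequences which are asymptotically coherent with the
maps `ς`. -/
def MemHInf {G : ℕ → Type*} [∀ n, Monoid (G n)] [∀ n, MetricSpace (G n)]
    (ς : ∀ n, G n → G (n + 1)) (g : ∀ n, G n) : Prop :=
  RegularSeq g ∧
    ∀ ε : ℝ, 0 < ε → ∃ N : ℕ, ∀ n, N ≤ n → ∀ j : ℕ, ∀ hnj : n < j,
      dist (g j) (sigmaComp ς hnj.le (g n)) < ε

lemma aux_dist_one_mul {K : Type*} [Monoid K] [MetricSpace K]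
    (hl : ∀ a b c : K, dist (a * b) (a * c) = dist b c) (a b : K) :
    dist (1 : K) (a * b) ≤ dist (1 : K) a + dist (1 : K) b := by
  have h : dist a (a * b) = dist (1 : K) b := by
    have := hl a 1 b; rwa [mul_one] at this
  calc dist (1 : K) (a * b) ≤ dist (1 : K) a + dist a (a * b) := dist_triangle _ _ _
    _ = dist (1 : K) a + dist (1 : K) b := by rw [h]

lemma aux_dist_cast {G : ℕ → Type*} [∀ i, MetricSpace (G i)] (φ : ∀ i, G i)
    {a b : ℕ} (e : a = b) (x : G a) :
    dist (φ b) (cast (congrArg G e) x) = dist (φ a) x := by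
  subst e; rfl

section auxiso

variable {A B : Type*} [Monoid A] [MetricSpace A] [Monoid B] [MetricSpace B]
  {ς : A → B} {κ : B → A} {ε : ℝ}

lemma auxA (hiso : IsLocAlmostIsoIso ς κ ε (1 / ε)) (hε : 0 < ε)
    {x : A} (hx : dist (1 : A) x ≤ 1 / ε) :
    dist (1 : B) (ς x) ≤ dist (1 : A) x + ε := by
  obtain ⟨h1, h2, h3, -⟩ := hiso
  have hA1 : (1 : A) ∈ Metric.closedBall (1 : A) (1 / ε) := by
    simp only [Metric.mem_closedBall, dist_self]; positivity
  have hB1 : (1 : B) ∈ Metric.closedBall (1 : B) (1 / ε) := by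
    simp only [Metric.mem_closedBall, dist_self]; positivity
  have h := h3 x (by simpa [Metric.mem_closedBall, dist_comm] using hx) 1 hA1 1 hB1
  simp only [h1, h2, mul_one] at h
  have h' := (abs_le.mp h).2
  rw [dist_comm (1 : B), dist_comm (1 : A)]
  linarith

lemma auxB (hiso : IsLocAlmostIsoIso ς κ ε (1 / ε)) (hε : 0 < ε)
    {x : A} (hx : dist (1 : A) x ≤ 1 / ε) (hsx : dist (1 : B) (ς x) ≤ 1 / ε) :
    dist x (κ (ς x)) ≤ ε := by
  obtain ⟨h1, h2, -, h4⟩ := hiso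
  have hB1 : (1 : B) ∈ Metric.closedBall (1 : B) (1 / ε) := by
    simp only [Metric.mem_closedBall, dist_self]; positivity
  have h := h4 (ς x) (by simpa [Metric.mem_closedBall, dist_comm] using hsx) 1 hB1
    x (by simpa [Metric.mem_closedBall, dist_comm] using hx)
  simp only [h2, mul_one, dist_self, sub_zero] at h
  rw [dist_comm]
  exact (abs_le.mp h).2

lemma auxC (hiso : IsLocAlmostIsoIso ς κ ε (1 / ε)) (hε : 0 < ε)
    {x y : A} (hx : dist (1 : A) x ≤ 1 / ε) (hy : dist (1 : A) y ≤ 1 / ε)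
    (hxy : dist (1 : A) (x * y) ≤ 1 / ε) (hs : dist (1 : B) (ς (x * y)) ≤ 1 / ε) :
    dist (ς x * ς y) (ς (x * y)) ≤ 2 * ε := by
  have hB := auxB hiso hε hxy hs
  obtain ⟨h1, h2, h3, -⟩ := hiso
  have h := h3 x (by simpa [Metric.mem_closedBall, dist_comm] using hx)
    y (by simpa [Metric.mem_closedBall, dist_comm] using hy)
    (ς (x * y)) (by simpa [Metric.mem_closedBall, dist_comm] using hs)
  have h' := (abs_le.mp h).2
  linarith

lemma auxD (hiso : IsLocAlmostIsoIso ς κ ε (1 / ε)) (hε : 0 < ε)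
    {x y : A} (hx : dist (1 : A) x ≤ 1 / ε) (hy : dist (1 : A) y ≤ 1 / ε)
    (hs : dist (1 : B) (ς y) ≤ 1 / ε) :
    dist (ς x) (ς y) ≤ dist x y + 2 * ε := by
  have hB := auxB hiso hε hy hs
  obtain ⟨h1, h2, h3, -⟩ := hiso
  have hA1 : (1 : A) ∈ Metric.closedBall (1 : A) (1 / ε) := by
    simp only [Metric.mem_closedBall, dist_self]; positivity
  have h := h3 x (by simpa [Metric.mem_closedBall, dist_comm] using hx) 1 hA1
    (ς y) (by simpa [Metric.mem_closedBall, dist_comm] using hs)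
  simp only [h1, mul_one] at h
  have h' := (abs_le.mp h).2
  have htri : dist x (κ (ς y)) ≤ dist x y + ε := (dist_triangle x y _).trans (by linarith)
  linarith

end auxiso

/-- Given a sequence of proper metric monoids linked by
`(1/ε_n)`-local `ε_n`-almost isometric isomorphisms with `Σ ε_n < ∞`, the set `H_∞`
is closed under pointwise multiplication. -/
theorem memHInf_mul
    (G : ℕ → Type*) [∀ n, Monoid (G n)] [∀ n, MetricSpace (G n)]
    (h_left : ∀ n, ∀ g h k : G n, dist (g * h) (g * k) = dist h k)
    (h_cont : ∀ n, Continuous fun p : G n × G n => p.1 * p.2)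
    (h_proper : ∀ n, ProperSpace (G n))
    (ε : ℕ → ℝ) (hε : ∀ n, 0 < ε n)
    (ς : ∀ n, G n → G (n + 1)) (κ : ∀ n, G (n + 1) → G n)
    (h_iso : ∀ n, IsLocAlmostIsoIso (ς n) (κ n) (ε n) (1 / ε n))
    (h_sum : Summable ε)
    (g g' : ∀ n, G n) (hg : MemHInf ς g) (hg' : MemHInf ς g') :
    MemHInf ς (fun n => g n * g' n) := by
  obtain ⟨⟨⟨M1, hM1⟩, hreg1⟩, hcoh1⟩ := hg
  obtain ⟨⟨⟨M2, hM2⟩, hreg2⟩, hcoh2⟩ := hg'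
  refine ⟨⟨⟨M1 + M2, fun n => ?_⟩, ?_⟩, ?_⟩
  · exact (aux_dist_one_mul (h_left n) _ _).trans (add_le_add (hM1 n) (hM2 n))
  · -- regularity of the product
    intro δ hδ
    obtain ⟨ω2, hω2, N2, h2⟩ := hreg2 δ hδ
    obtain ⟨ω1, hω1, N1, h1⟩ := hreg1 ω2 hω2
    refine ⟨ω1, hω1, max N1 N2, fun n hn h k hhk => ?_⟩
    have t1 := h1 n (le_trans (le_max_left _ _) hn) h k hhk
    have t2 := h2 n (le_trans (le_max_right _ _) hn) _ _ t1
    simpa [mul_assoc] using t2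
  · -- coherence of the product
    intro δ hδ
    obtain ⟨M, hMg, hMg', hM⟩ : ∃ M : ℝ, (∀ p, dist (1 : G p) (g p) ≤ M) ∧
        (∀ p, dist (1 : G p) (g' p) ≤ M) ∧ 0 ≤ M :=
      ⟨max M1 M2, fun p => (hM1 p).trans (le_max_left _ _),
        fun p => (hM2 p).trans (le_max_right _ _),
        le_trans dist_nonneg ((hM1 0).trans (le_max_left _ _))⟩
    set S := ∑' i, ε i with hSdef
    have hS : 0 ≤ S := tsum_nonneg fun i => (hε i).le
    set R := 2 * (M + S) + 1 with hRdef
    have hR0 : 0 < R := by rw [hRdef]; linarith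
    have hR1 : (1 : ℝ) ≤ R := by rw [hRdef]; linarith
    have hES : ∀ p k : ℕ, (∑ i ∈ Finset.range k, ε (p + i)) ≤ S := by
      intro p k
      have h1 : ∑ i ∈ Finset.range k, ε (p + i) = ∑ i ∈ Finset.Ico p (p + k), ε i := by
        rw [Finset.sum_Ico_eq_sum_range]; simp
      rw [h1, hSdef]
      exact Summable.sum_le_tsum _ (fun i _ => (hε i).le) h_sum
    have tail : ∀ τ : ℝ, 0 < τ → ∃ N, ∀ p, N ≤ p → ∀ k,
        (∑ i ∈ Finset.range k, ε (p + i)) < τ := by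
      intro τ hτ
      obtain ⟨s, hs⟩ := summable_iff_vanishing.mp h_sum (Set.Iio τ) (Iio_mem_nhds hτ)
      refine ⟨s.sup id + 1, fun p hp k => ?_⟩
      have h1 : ∑ i ∈ Finset.range k, ε (p + i) = ∑ i ∈ Finset.Ico p (p + k), ε i := by
        rw [Finset.sum_Ico_eq_sum_range]; simp
      rw [h1]
      have hdisj : Disjoint (Finset.Ico p (p + k)) s := by
        rw [Finset.disjoint_left]
        intro a ha has
        have h2 := (Finset.mem_Ico.mp ha).1
        have h3 : a ≤ s.sup id := Finset.le_sup (f := id) has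
        omega
      exact Set.mem_Iio.mp (hs _ hdisj)
    obtain ⟨N0, hN0⟩ : ∃ N, ∀ m, N ≤ m → ε m ≤ 1 / R := by
      obtain ⟨N, hN⟩ := Metric.tendsto_atTop.mp h_sum.tendsto_atTop_zero (1 / R)
        (by positivity)
      refine ⟨N, fun m hm => ?_⟩
      have := hN m hm
      rw [Real.dist_eq, sub_zero, abs_of_pos (hε m)] at this
      linarith
    obtain ⟨ω, hω, Nr, hr⟩ := hreg2 (δ / 3) (by linarith)
    obtain ⟨Ng, hNg⟩ := hcoh1 ω hω
    obtain ⟨Ng', hNg'⟩ := hcoh2 (δ / 3) (by linarith)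
    obtain ⟨Nt, hNt⟩ := tail (δ / 12) (by linarith)
    refine ⟨max (max N0 Nt) (max (max Ng Ng') Nr), fun n hn j hnj => ?_⟩
    simp only [max_le_iff] at hn
    obtain ⟨⟨hnN0, hnNt⟩, ⟨hnNg, hnNg'⟩, hnNr⟩ := hn
    -- key induction: norm bounds and almost multiplicativity of composed maps
    have key : ∀ k : ℕ,
        dist (1 : G (n + k)) (compMap ς n k (g n)) ≤ M + ∑ i ∈ Finset.range k, ε (n + i) ∧
        dist (1 : G (n + k)) (compMap ς n k (g' n)) ≤ M + ∑ i ∈ Finset.range k, ε (n + i) ∧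
        dist (1 : G (n + k)) (compMap ς n k (g n * g' n)) ≤
          2 * M + ∑ i ∈ Finset.range k, ε (n + i) ∧
        dist (compMap ς n k (g n) * compMap ς n k (g' n)) (compMap ς n k (g n * g' n)) ≤
          4 * ∑ i ∈ Finset.range k, ε (n + i) := by
      intro k
      induction k with
      | zero =>
        refine ⟨?_, ?_, ?_, ?_⟩
        · simpa [compMap] using hMg n
        · simpa [compMap] using hMg' n
        · simp only [compMap, Finset.range_zero, Finset.sum_empty, add_zero, Nat.add_zero]
          have := aux_dist_one_mul (h_left n) (g n) (g' n)
          linarith [hMg n, hMg' n]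
        · simp [compMap]
      | succ k ih =>
        obtain ⟨ih1, ih2, ih3, ih4⟩ := ih
        have hm : ε (n + k) ≤ 1 / R := hN0 (n + k) (by omega)
        have hεm := hε (n + k)
        have hRinv : R ≤ 1 / ε (n + k) := by
          rw [le_div_iff₀ hεm, mul_comm]
          exact (le_div_iff₀ hR0).mp hm
        have hm1 : ε (n + k) ≤ 1 := by
          have hle : 1 / R ≤ 1 := by rw [div_le_one hR0]; exact hR1
          linarith
        have hEk := hES n k
        set x := compMap ς n k (g n) with hxdef
        set y := compMap ς n k (g' n) with hydef
        set z := compMap ς n k (g n * g' n) with hzdef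
        have bx : dist (1 : G (n + k)) x ≤ 1 / ε (n + k) := by
          rw [hRdef] at hRinv; linarith
        have by' : dist (1 : G (n + k)) y ≤ 1 / ε (n + k) := by
          rw [hRdef] at hRinv; linarith
        have bz : dist (1 : G (n + k)) z ≤ 1 / ε (n + k) := by
          rw [hRdef] at hRinv; linarith
        have hxy1 := aux_dist_one_mul (h_left (n + k)) x y
        have bxy : dist (1 : G (n + k)) (x * y) ≤ 1 / ε (n + k) := by
          rw [hRdef] at hRinv; linarith
        have hAxy := auxA (h_iso (n + k)) hεm bxy
        have bsxy : dist (1 : G (n + k + 1)) (ς (n + k) (x * y)) ≤ 1 / ε (n + k) := by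
          rw [hRdef] at hRinv; linarith
        have hAz := auxA (h_iso (n + k)) hεm bz
        have bsz : dist (1 : G (n + k + 1)) (ς (n + k) z) ≤ 1 / ε (n + k) := by
          rw [hRdef] at hRinv; linarith
        have hc := auxC (h_iso (n + k)) hεm bx by' bxy bsxy
        have hd := auxD (h_iso (n + k)) hεm bxy bz bsz
        have hAx := auxA (h_iso (n + k)) hεm bx
        have hAy := auxA (h_iso (n + k)) hεm by'
        refine ⟨?_, ?_, ?_, ?_⟩
        · simp only [compMap, Finset.sum_range_succ, ← hxdef]
          linarith
        · simp only [compMap, Finset.sum_range_succ, ← hydef]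
          linarith
        · simp only [compMap, Finset.sum_range_succ, ← hzdef]
          linarith
        · simp only [compMap, Finset.sum_range_succ, ← hxdef, ← hydef, ← hzdef]
          calc dist (ς (n + k) x * ς (n + k) y) (ς (n + k) z)
              ≤ dist (ς (n + k) x * ς (n + k) y) (ς (n + k) (x * y))
                + dist (ς (n + k) (x * y)) (ς (n + k) z) := dist_triangle _ _ _
            _ ≤ 4 * (∑ i ∈ Finset.range k, ε (n + i) + ε (n + k)) := by linarith
    show dist (g j * g' j) (sigmaComp ς hnj.le (g n * g' n)) < δ
    have hrw : dist (g j * g' j) (sigmaComp ς hnj.le (g n * g' n)) =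
        dist (g (n + (j - n)) * g' (n + (j - n))) (compMap ς n (j - n) (g n * g' n)) :=
      aux_dist_cast (fun i => g i * g' i) (Nat.add_sub_cancel' hnj.le) _
    rw [hrw]
    have hgj : dist (g (n + (j - n))) (compMap ς n (j - n) (g n)) < ω := by
      have h0 := hNg n hnNg j hnj
      have hrg : dist (g j) (sigmaComp ς hnj.le (g n)) =
          dist (g (n + (j - n))) (compMap ς n (j - n) (g n)) :=
        aux_dist_cast g (Nat.add_sub_cancel' hnj.le) _
      rwa [hrg] at h0
    have hg'j : dist (g' (n + (j - n))) (compMap ς n (j - n) (g' n)) < δ / 3 := by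
      have h0 := hNg' n hnNg' j hnj
      have hrg : dist (g' j) (sigmaComp ς hnj.le (g' n)) =
          dist (g' (n + (j - n))) (compMap ς n (j - n) (g' n)) :=
        aux_dist_cast g' (Nat.add_sub_cancel' hnj.le) _
      rwa [hrg] at h0
    have t1 := hr (n + (j - n)) (le_trans hnNr (Nat.le_add_right n (j - n)))
      (g (n + (j - n))) (compMap ς n (j - n) (g n)) hgj
    have t2 := h_left (n + (j - n)) (compMap ς n (j - n) (g n)) (g' (n + (j - n)))
      (compMap ς n (j - n) (g' n))
    have t3 := (key (j - n)).2.2.2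
    have t4 := hNt n hnNt (j - n)
    calc dist (g (n + (j - n)) * g' (n + (j - n))) (compMap ς n (j - n) (g n * g' n))
        ≤ dist (g (n + (j - n)) * g' (n + (j - n)))
            (compMap ς n (j - n) (g n) * g' (n + (j - n)))
          + dist (compMap ς n (j - n) (g n) * g' (n + (j - n)))
            (compMap ς n (j - n) (g n) * compMap ς n (j - n) (g' n))
          + dist (compMap ς n (j - n) (g n) * compMap ς n (j - n) (g' n))
            (compMap ς n (j - n) (g n * g' n)) := dist_triangle4 _ _ _ _
      _ < δ := by rw [t2]; linarith
end

section
/- Let (G_n, δ_n)_{n∈ℕ} be a sequence of proper metric monoids. Let (g_n)_{n∈ℕ}, (g'_n)_{n∈ℕ}, (h_n)_{n∈ℕ}, (h'_n)_{n∈ℕ} be regular sequences such that lim_{n→∞} δ_n(g_n, g'_n) = 0 and lim_{n→∞} δ_n(h_n, h'_n) = 0. Then lim_{n→∞} δ_n(g_n h_n, g'_n h'_n) = 0. In other words, the equivalence relation (g_n) ∼ (h_n) ⟺ lim_{n→∞} δ_n(g_n, h_n) = 0 is a congruence for the pointwise multiplication of regular sequences. -/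
/-- The relation "`lim_n δ_n(g_n, h_n) = 0`" is a congruence for the
pointwise multiplication of regular sequences over a sequence of proper metric
monoids. -/
theorem regular_equiv_congruence
    (G : ℕ → Type*) [∀ n, Monoid (G n)] [∀ n, MetricSpace (G n)]
    (h_left : ∀ n, ∀ g h k : G n, dist (g * h) (g * k) = dist h k)
    (h_cont : ∀ n, Continuous fun p : G n × G n => p.1 * p.2)
    (h_proper : ∀ n, ProperSpace (G n))
    (g g' h h' : ∀ n, G n)
    (hg : RegularSeq g) (hg' : RegularSeq g') (hh : RegularSeq h) (hh' : RegularSeq h')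
    (hgg' : Filter.Tendsto (fun n => dist (g n) (g' n)) Filter.atTop (nhds 0))
    (hhh' : Filter.Tendsto (fun n => dist (h n) (h' n)) Filter.atTop (nhds 0)) :
    Filter.Tendsto (fun n => dist (g n * h n) (g' n * h' n)) Filter.atTop (nhds 0) := by
  rw [Metric.tendsto_atTop] at hgg' hhh' ⊢
  intro ε hε
  obtain ⟨ω, hω, N0, hN0⟩ := hh'.2 (ε / 2) (by linarith)
  obtain ⟨N1, hN1⟩ := hgg' ω hω
  obtain ⟨N2, hN2⟩ := hhh' (ε / 2) (by linarith)
  refine ⟨max N0 (max N1 N2), fun n hn => ?_⟩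
  have h0 : N0 ≤ n := le_trans (le_max_left _ _) hn
  have h1 : N1 ≤ n := le_trans (le_trans (le_max_left _ _) (le_max_right _ _)) hn
  have h2 : N2 ≤ n := le_trans (le_trans (le_max_right _ _) (le_max_right _ _)) hn
  have hA : dist (g n * h n) (g n * h' n) < ε / 2 := by
    rw [h_left]
    have := hN2 n h2
    rw [Real.dist_eq, sub_zero, abs_of_nonneg dist_nonneg] at this
    exact this
  have hB : dist (g n * h' n) (g' n * h' n) < ε / 2 := by
    apply hN0 n h0
    have := hN1 n h1
    rw [Real.dist_eq, sub_zero, abs_of_nonneg dist_nonneg] at this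
    exact this
  rw [Real.dist_eq, sub_zero, abs_of_nonneg dist_nonneg]
  calc dist (g n * h n) (g' n * h' n)
      ≤ dist (g n * h n) (g n * h' n) + dist (g n * h' n) (g' n * h' n) := dist_triangle _ _ _
    _ < ε / 2 + ε / 2 := add_lt_add hA hB
    _ = ε := by ring
end

section
/- Let (G, δ_G) and (H, δ_H) be two metric groups and let ε > 0. If (ς, κ) is a (1/ε)-local ε-almost isometric isomorphism from (G,δ_G) to (H,δ_H), then for every g ∈ G[1/ε] such that g⁻¹ ∈ G[1/ε], one has δ_H(ς(g)⁻¹, ς(g⁻¹)) ≤ ε. -/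
/-- If `(ς, κ)` is a `(1/ε)`-local `ε`-almost isometric isomorphism
between two metric groups, then for any `g ∈ G[1/ε]` with `g⁻¹ ∈ G[1/ε]` we have
`δ_H(ς(g)⁻¹, ς(g⁻¹)) ≤ ε`. -/
theorem uiso_inverse
    (G H : Type*) [Group G] [MetricSpace G] [Group H] [MetricSpace H]
    (h_leftG : ∀ g h k : G, dist (g * h) (g * k) = dist h k)
    (h_contG : Continuous fun p : G × G => p.1 * p.2)
    (h_invG : Continuous fun g : G => g⁻¹)
    (h_leftH : ∀ g h k : H, dist (g * h) (g * k) = dist h k)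
    (h_contH : Continuous fun p : H × H => p.1 * p.2)
    (h_invH : Continuous fun g : H => g⁻¹)
    (ε : ℝ) (hε : 0 < ε) (ς : G → H) (κ : H → G)
    (h_iso : IsLocAlmostIsoIso ς κ ε (1 / ε)) :
    ∀ g : G, g ∈ Metric.closedBall (1 : G) (1 / ε) →
      g⁻¹ ∈ Metric.closedBall (1 : G) (1 / ε) →
      dist (ς g)⁻¹ (ς g⁻¹) ≤ ε := by
  intro g hg hg'
  obtain ⟨hς1, hκ1, h1, h2⟩ := h_iso
  have h1e : (1 : H) ∈ Metric.closedBall (1 : H) (1 / ε) := by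
    simp; positivity
  have key := h1 g hg g⁻¹ hg' 1 h1e
  rw [mul_inv_cancel, hκ1, dist_self, sub_zero, abs_le] at key
  have : dist (ς g * ς g⁻¹) (ς g * (ς g)⁻¹) ≤ ε := by
    rw [mul_inv_cancel]; exact key.2
  rw [h_leftH] at this
  rwa [dist_comm] at this
end

section
/- Let (G_n, δ_n)_{n∈ℕ} be a sequence of proper metric groups such that for all ε > 0 there exist ω > 0 and N ∈ ℕ such that for all n ≥ N and all g, h ∈ G_n, if δ_n(g,h) < ω then δ_n(g⁻¹, h⁻¹) < ε. Then every bounded sequence (g_n)_{n∈ℕ} ∈ ∏_{n∈ℕ} G_n is regular; that is, the set of regular sequences equals the set of all bounded sequences. -/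
/-- If the inverse maps of a sequence of proper metric groups are
asymptotically uniformly equicontinuous, then every bounded sequence is regular,
i.e. the set of regular sequences equals the set of all bounded sequences. -/
theorem regular_eq_bounded_of_inverse_equicontinuous
    (G : ℕ → Type*) [∀ n, Group (G n)] [∀ n, MetricSpace (G n)]
    (h_left : ∀ n, ∀ g h k : G n, dist (g * h) (g * k) = dist h k)
    (h_cont : ∀ n, Continuous fun p : G n × G n => p.1 * p.2)
    (h_inv : ∀ n, Continuous fun g : G n => g⁻¹)
    (h_proper : ∀ n, ProperSpace (G n))
    (h_equi : ∀ ε : ℝ, 0 < ε → ∃ ω : ℝ, 0 < ω ∧ ∃ N : ℕ, ∀ n, N ≤ n →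
      ∀ g h : G n, dist g h < ω → dist g⁻¹ h⁻¹ < ε) :
    {g : ∀ n, G n | RegularSeq g} = {g : ∀ n, G n | BoundedSeq g} := by
  ext g
  simp only [Set.mem_setOf_eq]
  constructor
  · exact fun hg => hg.1
  · intro hb
    refine ⟨hb, fun ε hε => ?_⟩
    obtain ⟨ω, hω, N, hN⟩ := h_equi ε hε
    refine ⟨ω, hω, N, fun n hn h k hd => ?_⟩
    set u : G n := h⁻¹ * k with hu
    have e1 : dist ((g n)⁻¹) ((g n)⁻¹ * u⁻¹) = dist (1 : G n) u⁻¹ := by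
      have := h_left n (g n)⁻¹ 1 u⁻¹
      simpa using this
    have e2 : dist (1 : G n) u⁻¹ = dist u 1 := by
      have := h_left n u 1 u⁻¹
      simpa [dist_comm] using this.symm
    have e3 : dist u (1 : G n) = dist h k := by
      have := h_left n h⁻¹ h k
      simpa [hu, dist_comm] using this
    have h1 : dist ((g n)⁻¹) ((g n)⁻¹ * u⁻¹) < ω := by
      rw [e1, e2, e3]; exact hd
    have h2 := hN n hn ((g n)⁻¹) ((g n)⁻¹ * u⁻¹) h1
    have h3 : dist (g n) (u * g n) < ε := by
      simpa [mul_inv_rev] using h2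
    have e4 : dist (h * g n) (k * g n) = dist (g n) (u * g n) := by
      have := h_left n h (g n) (u * g n)
      simpa [hu, mul_assoc] using this
    rw [e4]; exact h3
end

section
/- Let (G_n, δ_n)_{n∈ℕ} be a sequence of proper metric groups that is Cauchy for the Gromov-Hausdorff monoid distance Υ, and suppose that for all ε > 0 there exist ω > 0 and N ∈ ℕ such that for all n ≥ N and all g, h ∈ G_n, if δ_n(g,h) < ω then δ_n(g⁻¹, h⁻¹) < ε. Then there exists a proper metric group (G, δ) such that lim_{n→∞} Υ((G_n,δ_n),(G,δ)) = 0. -/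
open Metric Filter

/-- The Gromov-Hausdorff monoid distance `Υ` between two (proper) metric monoids:
`min {√2/2, inf {ε > 0 : ∃ a (1/ε)-local ε-almost isometric isomorphism}}`. -/
noncomputable def Upsilon (G H : Type*) [Monoid G] [MetricSpace G] [Monoid H]
    [MetricSpace H] : ℝ :=
  sInf ({ε : ℝ | 0 < ε ∧ ∃ (ς : G → H) (κ : H → G), IsLocAlmostIsoIso ς κ ε (1 / ε)} ∪
    {Real.sqrt 2 / 2})

section UpsilonBasic

variable {A B : Type*} [Monoid A] [MetricSpace A] [Monoid B] [MetricSpace B]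

lemma IsLocAlmostIsoIso.symm {σ : A → B} {τ : B → A} {ε r : ℝ}
    (P : IsLocAlmostIsoIso σ τ ε r) : IsLocAlmostIsoIso τ σ ε r :=
  ⟨P.2.1, P.1, P.2.2.2, P.2.2.1⟩

lemma upsilon_bddBelow :
    BddBelow ({ε : ℝ | 0 < ε ∧ ∃ (ς : A → B) (κ : B → A), IsLocAlmostIsoIso ς κ ε (1 / ε)} ∪
      {Real.sqrt 2 / 2}) := by
  refine ⟨0, fun x hx => ?_⟩
  rcases hx with hx | hx
  · exact hx.1.le
  · simp only [Set.mem_singleton_iff] at hx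
    subst hx; positivity

lemma upsilon_nonneg : 0 ≤ Upsilon A B :=
  le_csInf ((Set.singleton_nonempty _).inr) (fun x hx => by
    rcases hx with hx | hx
    · exact hx.1.le
    · simp only [Set.mem_singleton_iff] at hx; subst hx; positivity)

lemma upsilon_le_of_exists {ε : ℝ} (hε : 0 < ε) (σ : A → B) (τ : B → A)
    (P : IsLocAlmostIsoIso σ τ ε (1 / ε)) : Upsilon A B ≤ ε :=
  csInf_le upsilon_bddBelow (Or.inl ⟨hε, σ, τ, P⟩)

lemma upsilon_lt_elim {c : ℝ} (hc : c ≤ Real.sqrt 2 / 2) (h : Upsilon A B < c) :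
    ∃ ε, 0 < ε ∧ ε < c ∧ ∃ (σ : A → B) (τ : B → A), IsLocAlmostIsoIso σ τ ε (1 / ε) := by
  obtain ⟨x, hx, hxc⟩ := exists_lt_of_csInf_lt ((Set.singleton_nonempty _).inr) h
  rcases hx with hx | hx
  · exact ⟨x, hx.1, hxc, hx.2⟩
  · simp only [Set.mem_singleton_iff] at hx
    subst hx; exact absurd (lt_of_lt_of_le hxc hc) (lt_irrefl _)

end UpsilonBasic

section LeftInv

variable {A : Type*} [Group A] [MetricSpace A]

variable (hA : ∀ g h k : A, dist (g * h) (g * k) = dist h k)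
include hA

lemma linv_dist_inv (g : A) : dist g⁻¹ 1 = dist g 1 := by
  have := hA g g⁻¹ 1
  rw [mul_inv_cancel, mul_one] at this
  rw [← this, dist_comm]

lemma linv_norm_mul (g h : A) : dist (g * h) 1 ≤ dist g 1 + dist h 1 := by
  have h1 : dist (g * h) g = dist h 1 := by
    have := hA g h 1; rwa [mul_one] at this
  calc dist (g * h) 1 ≤ dist (g * h) g + dist g 1 := dist_triangle _ _ _
    _ = dist h 1 + dist g 1 := by rw [h1]
    _ = dist g 1 + dist h 1 := by ring

end LeftInv

section ALemmas

variable {A B : Type*} [Group A] [MetricSpace A] [Group B] [MetricSpace B]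
variable (hA : ∀ g h k : A, dist (g * h) (g * k) = dist h k)
variable (hB : ∀ g h k : B, dist (g * h) (g * k) = dist h k)
variable {σ : A → B} {τ : B → A} {ε r : ℝ}
variable (P : IsLocAlmostIsoIso σ τ ε r) (hε : 0 < ε) (hr : 0 ≤ r)

include P hr

lemma aiso_A1 {g : A} {h : B} (hg : dist g 1 ≤ r) (hh : dist h 1 ≤ r) :
    |dist (σ g) h - dist g (τ h)| ≤ ε := by
  have := P.2.2.1 g (mem_closedBall.2 hg) 1 (mem_closedBall.2 (by simp [hr])) h
    (mem_closedBall.2 hh)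
  rwa [P.1, mul_one, mul_one] at this

lemma aiso_A2 {g : A} (hg : dist g 1 ≤ r) : dist (σ g) 1 ≤ dist g 1 + ε := by
  have h1 := aiso_A1 P hr hg (show dist (1 : B) 1 ≤ r by simp [hr])
  rw [P.2.1] at h1
  have := abs_le.1 h1
  linarith [this.1, this.2]

lemma aiso_A3 {g : A} (hg : dist g 1 + ε ≤ r) (hε' : 0 ≤ ε) : dist g (τ (σ g)) ≤ ε := by
  have hgr : dist g 1 ≤ r := by linarith
  have h2 : dist (σ g) 1 ≤ r := le_trans (aiso_A2 P hr hgr) hg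
  have h1 := aiso_A1 P hr hgr h2
  rw [dist_self] at h1
  have := abs_le.1 h1
  linarith [this.1, this.2]

lemma aiso_A4 {g g' : A} (hg : dist g 1 + ε ≤ r) (hg' : dist g' 1 + ε ≤ r) (hε' : 0 ≤ ε) :
    |dist (σ g) (σ g') - dist g g'| ≤ 2 * ε := by
  have hgr : dist g 1 ≤ r := by linarith
  have hg'r : dist g' 1 ≤ r := by linarith
  have h2 : dist (σ g') 1 ≤ r := le_trans (aiso_A2 P hr hg'r) hg'
  have h1 := aiso_A1 P hr hgr h2
  have h3 : dist g' (τ (σ g')) ≤ ε := aiso_A3 P hr hg' hε'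
  have h4 : |dist g (τ (σ g')) - dist g g'| ≤ ε := by
    have := abs_dist_sub_le (τ (σ g')) g' g
    rw [dist_comm (τ (σ g')) g, dist_comm g' g] at this
    calc |dist g (τ (σ g')) - dist g g'| ≤ dist (τ (σ g')) g' := this
      _ ≤ ε := by rw [dist_comm]; exact h3
  calc |dist (σ g) (σ g') - dist g g'|
      ≤ |dist (σ g) (σ g') - dist g (τ (σ g'))| + |dist g (τ (σ g')) - dist g g'| := by
        have := abs_sub_abs_le_abs_sub (dist (σ g) (σ g')) (dist g g'); 
        exact abs_sub_le _ _ _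
    _ ≤ ε + ε := add_le_add (h1) h4
    _ = 2 * ε := by ring

include hA hB in
lemma aiso_A5 {g g' : A} (hmul : dist g 1 + dist g' 1 + ε ≤ r) (hε' : 0 ≤ ε) :
    dist (σ (g * g')) (σ g * σ g') ≤ 2 * ε := by
  have hg'n : (0:ℝ) ≤ dist g' 1 := dist_nonneg
  have hgn : (0:ℝ) ≤ dist g 1 := dist_nonneg
  have hgr : dist g 1 ≤ r := by linarith
  have hg'r : dist g' 1 ≤ r := by linarith
  have hggr : dist (g * g') 1 + ε ≤ r := by
    have := linv_norm_mul hA g g'; linarith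
  have hσgg : dist (σ (g * g')) 1 ≤ r := le_trans (aiso_A2 P hr (by linarith)) hggr
  have h1 := P.2.2.1 g (mem_closedBall.2 hgr) g' (mem_closedBall.2 hg'r) (σ (g * g'))
    (mem_closedBall.2 hσgg)
  have h2 : dist (g * g') (τ (σ (g * g'))) ≤ ε := aiso_A3 P hr hggr hε'
  have := abs_le.1 h1
  rw [dist_comm]
  linarith [this.1, this.2]

include hA hB in
lemma aiso_A6 {g : A} (hg : dist g 1 + dist g 1 + ε ≤ r) (hε' : 0 ≤ ε) :
    dist (σ g⁻¹) (σ g)⁻¹ ≤ 2 * ε := by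
  have h0 : dist g⁻¹ 1 = dist g 1 := linv_dist_inv hA g
  have h1 : dist (σ (g * g⁻¹)) (σ g * σ g⁻¹) ≤ 2 * ε := by
    refine aiso_A5 hA hB P hr ?_ hε'
    rw [h0]; exact hg
  rw [mul_inv_cancel, P.1] at h1
  have h2 : dist (σ g * (σ g)⁻¹) (σ g * σ g⁻¹) = dist (σ g)⁻¹ (σ g⁻¹) := hB _ _ _
  rw [mul_inv_cancel] at h2
  rw [dist_comm]
  rw [← h2]
  exact h1

end ALemmas

noncomputable section PackSection

/-- The geometric scale `E k = (1/2)^k`. -/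
def Esc (k : ℕ) : ℝ := (2:ℝ)⁻¹ ^ k

lemma Esc_pos (k : ℕ) : 0 < Esc k := by unfold Esc; positivity

lemma Esc_succ (k : ℕ) : Esc (k + 1) = Esc k / 2 := by
  simp [Esc, pow_succ]; ring

lemma Esc_le_one (k : ℕ) : Esc k ≤ 1 := by
  simpa [Esc] using pow_le_one₀ (by norm_num : (0:ℝ) ≤ 2⁻¹) (by norm_num)

lemma Esc_antitone {k j : ℕ} (h : k ≤ j) : Esc j ≤ Esc k :=
  pow_le_pow_of_le_one (by norm_num) (by norm_num) h

lemma Esc_tendsto : Filter.Tendsto Esc atTop (nhds 0) := by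
  exact tendsto_pow_atTop_nhds_zero_of_lt_one
    (by norm_num : (0:ℝ) ≤ 2⁻¹) (by norm_num : (2:ℝ)⁻¹ < 1)

lemma Esc_mul_two_pow (k : ℕ) : Esc k * (2:ℝ)^k = 1 := by
  simp [Esc, ← mul_pow]

variable (G : ℕ → Type) [∀ n, Group (G n)] [∀ n, MetricSpace (G n)]

/-- All the data needed for the limit construction. -/
structure Pack : Type 1 where
  left : ∀ m, ∀ g h k : G m, dist (g * h) (g * k) = dist h k
  proper : ∀ m, ProperSpace (G m)
  equi : ∀ ε : ℝ, 0 < ε → ∃ ω : ℝ, 0 < ω ∧ ∃ N : ℕ, ∀ m, N ≤ m →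
    ∀ g h : G m, dist g h < ω → dist g⁻¹ h⁻¹ < ε
  n : ℕ → ℕ
  mono : StrictMono n
  eps : ℕ → ℝ
  eps_pos : ∀ k, 0 < eps k
  eps_lt : ∀ k, eps k < Esc (k + 1)
  σ : ∀ k, G (n k) → G (n (k + 1))
  τ : ∀ k, G (n (k + 1)) → G (n k)
  iso : ∀ k, IsLocAlmostIsoIso (σ k) (τ k) (eps k) (1 / eps k)
  hub : ∀ k m, n k ≤ m → ∃ e : ℝ, 0 < e ∧ e < Esc (k + 1) ∧
    ∃ (ς : G m → G (n k)) (κ : G (n k) → G m), IsLocAlmostIsoIso ς κ e (1 / e)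

variable {G}

namespace Pack

variable (c : Pack G)

lemma r_ge (k : ℕ) : (2:ℝ) ^ (k + 1) ≤ 1 / c.eps k := by
  have h1 : c.eps k < Esc (k + 1) := c.eps_lt k
  have h2 : Esc (k+1) * (2:ℝ)^(k+1) = 1 := Esc_mul_two_pow (k+1)
  have h3 : 0 < c.eps k := c.eps_pos k
  rw [le_div_iff₀ h3]
  nlinarith [Esc_pos (k+1), pow_pos (show (0:ℝ) < 2 by norm_num) (k+1)]

lemma eps_le_esc (k : ℕ) : c.eps k ≤ Esc (k + 1) := (c.eps_lt k).le

lemma eps_le_one (k : ℕ) : c.eps k ≤ 1 := le_trans (c.eps_le_esc k) (Esc_le_one _)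

/-- Forward chain maps. -/
def Phi : ∀ {k j : ℕ}, k ≤ j → G (c.n k) → G (c.n j) := fun {k j} h g =>
  Nat.leRecOn h (fun {m} (x : G (c.n m)) => c.σ m x) g

lemma Phi_self {k : ℕ} (h : k ≤ k) (g : G (c.n k)) : c.Phi h g = g :=
  Nat.leRecOn_self (C := fun m => G (c.n m)) g

lemma Phi_succ {k j : ℕ} (h : k ≤ j) (h2 : k ≤ j + 1) (g : G (c.n k)) :
    c.Phi h2 g = c.σ j (c.Phi h g) :=
  Nat.leRecOn_succ (C := fun m => G (c.n m)) h g

lemma Phi_succ_self {k : ℕ} (h : k ≤ k + 1) (g : G (c.n k)) :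
    c.Phi h g = c.σ k g := by
  rw [c.Phi_succ le_rfl h, c.Phi_self]

lemma Phi_trans {k m j : ℕ} (h1 : k ≤ m) (h2 : m ≤ j) (g : G (c.n k)) :
    c.Phi (le_trans h1 h2) g = c.Phi h2 (c.Phi h1 g) :=
  Nat.leRecOn_trans (C := fun m => G (c.n m)) h1 h2 g

/-- Backward chain maps. -/
def Tau : ∀ {j k : ℕ}, k ≤ j → G (c.n j) → G (c.n k) := fun {j k} h =>
  Nat.leRecOn (C := fun m => G (c.n m) → G (c.n k)) h
    (fun {m} (f : G (c.n m) → G (c.n k)) => f ∘ c.τ m) id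

lemma Tau_self {k : ℕ} (h : k ≤ k) (g : G (c.n k)) : c.Tau h g = g := by
  unfold Tau
  rw [Nat.leRecOn_self (C := fun m => G (c.n m) → G (c.n k))]; rfl

lemma Tau_succ {j k : ℕ} (h : k ≤ j) (h2 : k ≤ j + 1) (g : G (c.n (j + 1))) :
    c.Tau h2 g = c.Tau h (c.τ j g) := by
  unfold Tau
  rw [Nat.leRecOn_succ (C := fun m => G (c.n m) → G (c.n k)) h]; rfl


lemma two_pow_le {k j : ℕ} (h : k ≤ j) : (2:ℝ)^(k+1) ≤ 2^(j+1) :=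
  pow_le_pow_right₀ (by norm_num) (by omega)

lemma hr_nonneg (i : ℕ) : (0:ℝ) ≤ 1 / c.eps i :=
  div_nonneg zero_le_one (c.eps_pos i).le

lemma Phi_one {k j : ℕ} (h : k ≤ j) : c.Phi h (1 : G (c.n k)) = 1 := by
  induction j, h using Nat.le_induction with
  | base => exact c.Phi_self _ _
  | succ j hkj ih =>
    rw [c.Phi_succ hkj, ih, (c.iso j).1]

lemma Tau_one {k j : ℕ} (h : k ≤ j) : c.Tau h (1 : G (c.n j)) = 1 := by
  induction j, h using Nat.le_induction with
  | base => exact c.Tau_self _ _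
  | succ j hkj ih =>
    rw [c.Tau_succ hkj, (c.iso j).2.1, ih]

lemma M1 {k j : ℕ} (h : k ≤ j) {g : G (c.n k)} (hg : dist g 1 + 2 ≤ (2:ℝ)^(k+1)) :
    dist (c.Phi h g) 1 ≤ dist g 1 + (Esc k - Esc j) := by
  induction j, h using Nat.le_induction with
  | base => rw [c.Phi_self]; simp
  | succ j hkj ih =>
    have hkj1 : (2:ℝ)^(k+1) ≤ 2^(j+1) := two_pow_le hkj
    have hEk : Esc k ≤ 1 := Esc_le_one k
    have hEj : 0 < Esc j := Esc_pos j
    have hEj1 : Esc j ≤ 1 := Esc_le_one j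
    have hEs : Esc (j+1) = Esc j / 2 := Esc_succ j
    have heps : c.eps j ≤ Esc (j+1) := c.eps_le_esc j
    have hrj : (2:ℝ)^(j+1) ≤ 1 / c.eps j := c.r_ge j
    have hball : dist (c.Phi hkj g) 1 ≤ 1 / c.eps j := by linarith
    have h2 := aiso_A2 (c.iso j) (c.hr_nonneg j) hball
    rw [c.Phi_succ hkj]
    linarith

lemma M2 {k j : ℕ} (h : k ≤ j) {g g' : G (c.n k)}
    (hg : dist g 1 + 2 ≤ (2:ℝ)^(k+1)) (hg' : dist g' 1 + 2 ≤ (2:ℝ)^(k+1)) :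
    |dist (c.Phi h g) (c.Phi h g') - dist g g'| ≤ 2 * (Esc k - Esc j) := by
  induction j, h using Nat.le_induction with
  | base => rw [c.Phi_self, c.Phi_self]; simp
  | succ j hkj ih =>
    have hkj1 : (2:ℝ)^(k+1) ≤ 2^(j+1) := two_pow_le hkj
    have hEk : Esc k ≤ 1 := Esc_le_one k
    have hEj : 0 < Esc j := Esc_pos j
    have hEj1 : Esc j ≤ 1 := Esc_le_one j
    have hEs : Esc (j+1) = Esc j / 2 := Esc_succ j
    have heps : c.eps j ≤ Esc (j+1) := c.eps_le_esc j
    have heps0 : 0 < c.eps j := c.eps_pos j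
    have hrj : (2:ℝ)^(j+1) ≤ 1 / c.eps j := c.r_ge j
    have hn1 := c.M1 hkj hg
    have hn2 := c.M1 hkj hg'
    have hb1 : dist (c.Phi hkj g) 1 + c.eps j ≤ 1 / c.eps j := by linarith
    have hb2 : dist (c.Phi hkj g') 1 + c.eps j ≤ 1 / c.eps j := by linarith
    have h4 := aiso_A4 (c.iso j) (c.hr_nonneg j) hb1 hb2 heps0.le
    rw [c.Phi_succ hkj, c.Phi_succ hkj]
    have htri : |dist (c.σ j (c.Phi hkj g)) (c.σ j (c.Phi hkj g')) - dist g g'| ≤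
        |dist (c.σ j (c.Phi hkj g)) (c.σ j (c.Phi hkj g')) -
          dist (c.Phi hkj g) (c.Phi hkj g')| +
        |dist (c.Phi hkj g) (c.Phi hkj g') - dist g g'| := abs_sub_le _ _ _
    linarith

lemma M3 {k j : ℕ} (h : k ≤ j) {g g' : G (c.n k)} {q : ℝ}
    (hg : dist g 1 ≤ q) (hg' : dist g' 1 ≤ q) (hq : 2*q + 4 ≤ (2:ℝ)^(k+1)) :
    dist (c.Phi h (g * g')) (c.Phi h g * c.Phi h g') ≤ 4 * (Esc k - Esc j) := by
  have hq0 : 0 ≤ q := le_trans dist_nonneg hg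
  induction j, h using Nat.le_induction with
  | base => rw [c.Phi_self, c.Phi_self, c.Phi_self]; simp
  | succ j hkj ih =>
    have hkj1 : (2:ℝ)^(k+1) ≤ 2^(j+1) := two_pow_le hkj
    have hEk : Esc k ≤ 1 := Esc_le_one k
    have hEj : 0 < Esc j := Esc_pos j
    have hEj1 : Esc j ≤ 1 := Esc_le_one j
    have hEs : Esc (j+1) = Esc j / 2 := Esc_succ j
    have heps : c.eps j ≤ Esc (j+1) := c.eps_le_esc j
    have heps0 : 0 < c.eps j := c.eps_pos j
    have hrj : (2:ℝ)^(j+1) ≤ 1 / c.eps j := c.r_ge j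
    have hnm : dist (g * g') 1 ≤ 2*q := by
      have := linv_norm_mul (c.left (c.n k)) g g'; linarith
    have hn0 := c.M1 hkj (g := g * g') (by linarith)
    have hn1 := c.M1 hkj (g := g) (by linarith)
    have hn2 := c.M1 hkj (g := g') (by linarith)
    have hnmul : dist (c.Phi hkj g * c.Phi hkj g') 1 ≤ 2*q + 2 := by
      have := linv_norm_mul (c.left (c.n j)) (c.Phi hkj g) (c.Phi hkj g'); linarith
    have hb1 : dist (c.Phi hkj (g * g')) 1 + c.eps j ≤ 1 / c.eps j := by linarith
    have hb2 : dist (c.Phi hkj g * c.Phi hkj g') 1 + c.eps j ≤ 1 / c.eps j := by linarith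
    have h4 := aiso_A4 (c.iso j) (c.hr_nonneg j) hb1 hb2 heps0.le
    have h5 := aiso_A5 (c.left (c.n j)) (c.left (c.n (j+1))) (c.iso j) (c.hr_nonneg j)
      (g := c.Phi hkj g) (g' := c.Phi hkj g') (by linarith) heps0.le
    rw [c.Phi_succ hkj, c.Phi_succ hkj, c.Phi_succ hkj]
    have habs := abs_le.1 h4
    calc dist (c.σ j (c.Phi hkj (g * g'))) (c.σ j (c.Phi hkj g) * c.σ j (c.Phi hkj g'))
        ≤ dist (c.σ j (c.Phi hkj (g * g'))) (c.σ j (c.Phi hkj g * c.Phi hkj g')) +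
          dist (c.σ j (c.Phi hkj g * c.Phi hkj g')) (c.σ j (c.Phi hkj g) * c.σ j (c.Phi hkj g'))
          := dist_triangle _ _ _
      _ ≤ 4 * (Esc k - Esc (j+1)) := by linarith [habs.2]

lemma M4 {k j : ℕ} (h : k ≤ j) {g : G (c.n k)}
    (hg : 2 * dist g 1 + 4 ≤ (2:ℝ)^(k+1)) :
    dist (c.Phi h g⁻¹) (c.Phi h g)⁻¹ ≤ 4 * (Esc k - Esc j) := by
  have hd0 : (0:ℝ) ≤ dist g 1 := dist_nonneg
  induction j, h using Nat.le_induction with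
  | base => rw [c.Phi_self, c.Phi_self]; simp
  | succ j hkj ih =>
    have hkj1 : (2:ℝ)^(k+1) ≤ 2^(j+1) := two_pow_le hkj
    have hEk : Esc k ≤ 1 := Esc_le_one k
    have hEj : 0 < Esc j := Esc_pos j
    have hEj1 : Esc j ≤ 1 := Esc_le_one j
    have hEs : Esc (j+1) = Esc j / 2 := Esc_succ j
    have heps : c.eps j ≤ Esc (j+1) := c.eps_le_esc j
    have heps0 : 0 < c.eps j := c.eps_pos j
    have hrj : (2:ℝ)^(j+1) ≤ 1 / c.eps j := c.r_ge j
    have hinv : dist g⁻¹ 1 = dist g 1 := linv_dist_inv (c.left (c.n k)) g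
    have hn1 := c.M1 hkj (g := g) (by linarith)
    have hn2 := c.M1 hkj (g := g⁻¹) (by rw [hinv]; linarith)
    have hninv : dist (c.Phi hkj g)⁻¹ 1 = dist (c.Phi hkj g) 1 :=
      linv_dist_inv (c.left (c.n j)) _
    have hb1 : dist (c.Phi hkj g⁻¹) 1 + c.eps j ≤ 1 / c.eps j := by linarith
    have hb2 : dist (c.Phi hkj g)⁻¹ 1 + c.eps j ≤ 1 / c.eps j := by
      rw [hninv]; linarith
    have h4 := aiso_A4 (c.iso j) (c.hr_nonneg j) hb1 hb2 heps0.le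
    have h6 := aiso_A6 (c.left (c.n j)) (c.left (c.n (j+1))) (c.iso j) (c.hr_nonneg j)
      (g := c.Phi hkj g) (by linarith) heps0.le
    rw [c.Phi_succ hkj, c.Phi_succ hkj]
    have habs := abs_le.1 h4
    calc dist (c.σ j (c.Phi hkj g⁻¹)) (c.σ j (c.Phi hkj g))⁻¹
        ≤ dist (c.σ j (c.Phi hkj g⁻¹)) (c.σ j (c.Phi hkj g)⁻¹) +
          dist (c.σ j (c.Phi hkj g)⁻¹) (c.σ j (c.Phi hkj g))⁻¹ := dist_triangle _ _ _
      _ ≤ 4 * (Esc k - Esc (j+1)) := by linarith [habs.2]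

lemma M6 {k j : ℕ} (h : k ≤ j) {g : G (c.n j)}
    (hg : dist g 1 + 2 + (Esc k - Esc j) ≤ (2:ℝ)^(k+1)) :
    dist (c.Tau h g) 1 ≤ dist g 1 + (Esc k - Esc j) := by
  induction j, h using Nat.le_induction with
  | base => rw [c.Tau_self]; simp
  | succ j hkj ih =>
    have hkj1 : (2:ℝ)^(k+1) ≤ 2^(j+1) := two_pow_le hkj
    have hEk : Esc k ≤ 1 := Esc_le_one k
    have hEkj : Esc j ≤ Esc k := Esc_antitone hkj
    have hEj : 0 < Esc j := Esc_pos j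
    have hEj1 : Esc j ≤ 1 := Esc_le_one j
    have hEs : Esc (j+1) = Esc j / 2 := Esc_succ j
    have heps : c.eps j ≤ Esc (j+1) := c.eps_le_esc j
    have heps0 : 0 < c.eps j := c.eps_pos j
    have hrj : (2:ℝ)^(j+1) ≤ 1 / c.eps j := c.r_ge j
    have hball : dist g 1 ≤ 1 / c.eps j := by linarith
    have h2 := aiso_A2 (c.iso j).symm (c.hr_nonneg j) hball
    rw [c.Tau_succ hkj]
    have hih := ih (g := c.τ j g) (by linarith)
    linarith

lemma M5 {k j : ℕ} (h : k ≤ j) {g : G (c.n j)}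
    (hg : dist g 1 + 4 + 2 * (Esc k - Esc j) ≤ (2:ℝ)^(k+1)) :
    dist (c.Phi h (c.Tau h g)) g ≤ 6 * (Esc k - Esc j) := by
  induction j, h using Nat.le_induction with
  | base => rw [c.Tau_self, c.Phi_self]; simp
  | succ j hkj ih =>
    have hkj1 : (2:ℝ)^(k+1) ≤ 2^(j+1) := two_pow_le hkj
    have hEk : Esc k ≤ 1 := Esc_le_one k
    have hEkj : Esc j ≤ Esc k := Esc_antitone hkj
    have hEj : 0 < Esc j := Esc_pos j
    have hEj1 : Esc j ≤ 1 := Esc_le_one j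
    have hEs : Esc (j+1) = Esc j / 2 := Esc_succ j
    have heps : c.eps j ≤ Esc (j+1) := c.eps_le_esc j
    have heps0 : 0 < c.eps j := c.eps_pos j
    have hrj : (2:ℝ)^(j+1) ≤ 1 / c.eps j := c.r_ge j
    have hd0 : (0:ℝ) ≤ dist g 1 := dist_nonneg
    -- second term : dist (σ_j (τ_j g)) g ≤ eps j
    have hA3 := aiso_A3 (c.iso j).symm (c.hr_nonneg j) (g := g) (by linarith) heps0.le
    -- norms
    have hτ : dist (c.τ j g) 1 ≤ dist g 1 + c.eps j :=
      aiso_A2 (c.iso j).symm (c.hr_nonneg j) (by linarith)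
    have hT : dist (c.Tau hkj (c.τ j g)) 1 ≤ dist (c.τ j g) 1 + (Esc k - Esc j) :=
      c.M6 hkj (by linarith)
    have hP : dist (c.Phi hkj (c.Tau hkj (c.τ j g))) 1 ≤
        dist (c.Tau hkj (c.τ j g)) 1 + (Esc k - Esc j) :=
      c.M1 hkj (by linarith)
    have hb1 : dist (c.Phi hkj (c.Tau hkj (c.τ j g))) 1 + c.eps j ≤ 1 / c.eps j := by
      linarith
    have hb2 : dist (c.τ j g) 1 + c.eps j ≤ 1 / c.eps j := by linarith
    have h4 := aiso_A4 (c.iso j) (c.hr_nonneg j) hb1 hb2 heps0.le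
    have hih := ih (g := c.τ j g) (by linarith)
    have habs := abs_le.1 h4
    rw [c.Tau_succ hkj, c.Phi_succ hkj]
    calc dist (c.σ j (c.Phi hkj (c.Tau hkj (c.τ j g)))) g
        ≤ dist (c.σ j (c.Phi hkj (c.Tau hkj (c.τ j g)))) (c.σ j (c.τ j g)) +
          dist (c.σ j (c.τ j g)) g := dist_triangle _ _ _
      _ ≤ 6 * (Esc k - Esc (j+1)) := by
          have hA3' : dist (c.σ j (c.τ j g)) g ≤ c.eps j := by
            rw [dist_comm]; exact hA3
          linarith [habs.2]

end Pack

end PackSection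

section PackExists

variable {G : ℕ → Type} [∀ n, Group (G n)] [∀ n, MetricSpace (G n)]

lemma esc_le_sqrt2 (k : ℕ) : Esc (k + 1) ≤ Real.sqrt 2 / 2 := by
  have h1 : (1:ℝ) ≤ Real.sqrt 2 := by
    nlinarith [Real.sq_sqrt (show (0:ℝ) ≤ 2 by norm_num), Real.sqrt_nonneg 2]
  have h2 : Esc (k+1) ≤ Esc 1 := Esc_antitone (by omega)
  have h3 : Esc 1 = 1/2 := by norm_num [Esc]
  linarith

lemma exists_pack
    (h_left : ∀ n, ∀ g h k : G n, dist (g * h) (g * k) = dist h k)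
    (h_proper : ∀ n, ProperSpace (G n))
    (h_cauchy : ∀ ε : ℝ, 0 < ε → ∃ N : ℕ, ∀ m, N ≤ m → ∀ n, N ≤ n →
      Upsilon (G m) (G n) < ε)
    (h_equi : ∀ ε : ℝ, 0 < ε → ∃ ω : ℝ, 0 < ω ∧ ∃ N : ℕ, ∀ n, N ≤ n →
      ∀ g h : G n, dist g h < ω → dist g⁻¹ h⁻¹ < ε) :
    Nonempty (Pack G) := by
  have hN : ∀ k : ℕ, ∃ N, ∀ m, N ≤ m → ∀ m', N ≤ m' →
      Upsilon (G m) (G m') < Esc (k+1) := fun k => h_cauchy _ (Esc_pos _)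
  choose N hNs using hN
  set n : ℕ → ℕ := fun k => Nat.rec (N 0) (fun k ih => max (ih + 1) (N (k+1))) k with hn
  have hmono : StrictMono n :=
    strictMono_nat_of_lt_succ (fun k => lt_of_lt_of_le (Nat.lt_succ_self _) (le_max_left _ _))
  have hnN : ∀ k, N k ≤ n k := by
    intro k
    cases k with
    | zero => exact le_rfl
    | succ k => exact le_max_right _ _
  have key : ∀ k m m', n k ≤ m → n k ≤ m' → Upsilon (G m) (G m') < Esc (k+1) :=
    fun k m m' h1 h2 => hNs k _ (le_trans (hnN k) h1) _ (le_trans (hnN k) h2)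
  have cons : ∀ k, ∃ ε, 0 < ε ∧ ε < Esc (k+1) ∧
      ∃ (σ : G (n k) → G (n (k+1))) (τ : G (n (k+1)) → G (n k)),
        IsLocAlmostIsoIso σ τ ε (1/ε) :=
    fun k => upsilon_lt_elim (esc_le_sqrt2 k)
      (key k (n k) (n (k+1)) le_rfl (hmono (Nat.lt_succ_self k)).le)
  choose eps heps0 hepslt σ' τ' hiso using cons
  exact ⟨⟨h_left, h_proper, h_equi, n, hmono, eps, heps0, hepslt, σ', τ', hiso,
    fun k m hm => upsilon_lt_elim (esc_le_sqrt2 k) (key k m (n k) hm le_rfl)⟩⟩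

end PackExists

section LimSection

variable {G : ℕ → Type} [∀ n, Group (G n)] [∀ n, MetricSpace (G n)]

/-- The space of bounded coherent sequences. -/
@[ext]
structure Lim (c : Pack G) : Type where
  seq : ∀ k, G (c.n k)
  bdd : ∃ C : ℝ, ∀ᶠ k in atTop, dist (seq k) 1 ≤ C
  coh : ∀ ε : ℝ, 0 < ε → ∃ K, ∀ k, K ≤ k → ∀ j, ∀ (h : k ≤ j),
    dist (c.Phi h (seq k)) (seq j) ≤ ε

namespace Pack

variable {c : Pack G}

/-- uniform right-translation continuity (pointwise, for large indices). -/
lemma equi_right (c : Pack G) {ε : ℝ} (hε : 0 < ε) :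
    ∃ ω : ℝ, 0 < ω ∧ ∃ N : ℕ, ∀ m, N ≤ m → ∀ a b x : G m,
      dist a b < ω → dist (a * x) (b * x) < ε := by
  obtain ⟨ω₁, hω₁, N₁, h₁⟩ := c.equi ε hε
  obtain ⟨ω₂, hω₂, N₂, h₂⟩ := c.equi ω₁ hω₁
  refine ⟨ω₂, hω₂, max N₁ N₂, fun m hm a b x hab => ?_⟩
  have e1 : dist a⁻¹ b⁻¹ < ω₁ := h₂ m (le_trans (le_max_right _ _) hm) a b hab
  have e2 : dist (x⁻¹ * a⁻¹) (x⁻¹ * b⁻¹) < ω₁ := by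
    rw [c.left m x⁻¹ a⁻¹ b⁻¹]; exact e1
  have e3 := h₁ m (le_trans (le_max_left _ _) hm) _ _ e2
  rwa [← mul_inv_rev, ← mul_inv_rev, inv_inv, inv_inv] at e3
end Pack

namespace Lim

variable {c : Pack G}

lemma bdd' (x : Lim c) : ∃ C : ℝ, 0 ≤ C ∧ ∀ᶠ k in atTop, dist (x.seq k) 1 ≤ C := by
  obtain ⟨C, hC⟩ := x.bdd
  exact ⟨max C 0, le_max_right _ _, hC.mono fun k hk => le_trans hk (le_max_left _ _)⟩

lemma cap_exists (C : ℝ) : ∃ K : ℕ, ∀ k, K ≤ k → C ≤ (2:ℝ)^(k+1) := by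
  obtain ⟨K, hK⟩ := pow_unbounded_of_one_lt C (one_lt_two (α := ℝ))
  refine ⟨K, fun k hk => ?_⟩
  calc C ≤ 2^K := hK.le
    _ ≤ (2:ℝ)^(k+1) := pow_le_pow_right₀ one_le_two (by omega)

lemma esc_small {ε : ℝ} (hε : 0 < ε) : ∃ K : ℕ, ∀ k, K ≤ k → Esc k ≤ ε := by
  have := Esc_tendsto.eventually_lt_const hε
  rw [eventually_atTop] at this
  obtain ⟨K, hK⟩ := this
  exact ⟨K, fun k hk => (hK k hk).le⟩

instance : One (Lim c) :=
  ⟨⟨fun _ => 1, ⟨0, Eventually.of_forall fun k => by simp⟩,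
    fun ε hε => ⟨0, fun k _ j h => by rw [c.Phi_one]; simp [hε.le]⟩⟩⟩

@[simp] lemma one_seq (k : ℕ) : (1 : Lim c).seq k = 1 := rfl

instance : Mul (Lim c) := ⟨fun x y =>
  { seq := fun k => x.seq k * y.seq k
    bdd := by
      obtain ⟨C₁, _, h₁⟩ := x.bdd'
      obtain ⟨C₂, _, h₂⟩ := y.bdd'
      exact ⟨C₁ + C₂, h₁.mp (h₂.mono fun k hk2 hk1 => le_trans
        (linv_norm_mul (c.left _) _ _) (add_le_add hk1 hk2))⟩
    coh := by
      intro ε hε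
      obtain ⟨ω, hω, Nr, hr⟩ := c.equi_right (show 0 < ε/3 by linarith)
      obtain ⟨C, hC0, hCev⟩ := x.bdd'
      obtain ⟨C', hC0', hCev'⟩ := y.bdd'
      obtain ⟨Kb, hKb⟩ := eventually_atTop.1 hCev
      obtain ⟨Kb', hKb'⟩ := eventually_atTop.1 hCev'
      obtain ⟨Kc, hKc⟩ := cap_exists (2 * (C + C') + 4)
      obtain ⟨Ke, hKe⟩ := esc_small (show 0 < ε/12 by linarith)
      obtain ⟨K₁, hK₁⟩ := x.coh (min (ω/2) 1) (by positivity)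
      obtain ⟨K₂, hK₂⟩ := y.coh (ε/3) (by linarith)
      refine ⟨max (max (max Kb Kb') (max Kc Ke)) (max (max K₁ K₂) Nr), fun k hk j hkj => ?_⟩
      simp only [ge_iff_le, max_le_iff] at hk
      obtain ⟨⟨⟨hKb1, hKb1'⟩, hKc1, hKe1⟩, ⟨hK11, hK21⟩, hNr1⟩ := hk
      have hxk : dist (x.seq k) 1 ≤ C := hKb k hKb1
      have hyk : dist (y.seq k) 1 ≤ C' := hKb' k hKb1'
      have hxC : dist (x.seq k) 1 ≤ C + C' := by linarith
      have hyC : dist (y.seq k) 1 ≤ C + C' := by linarith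
      have hM3 := c.M3 hkj hxC hyC (hKc k hKc1)
      have hEk : Esc k ≤ ε/12 := hKe k hKe1
      have hEj : 0 < Esc j := Esc_pos j
      have t1 : dist (c.Phi hkj (x.seq k * y.seq k))
          (c.Phi hkj (x.seq k) * c.Phi hkj (y.seq k)) ≤ ε/3 := by linarith
      have t2 : dist (c.Phi hkj (x.seq k) * c.Phi hkj (y.seq k))
          (x.seq j * c.Phi hkj (y.seq k)) < ε/3 := by
        refine hr (c.n j) (le_trans (le_trans hNr1 hkj) (c.mono.le_apply)) _ _ _ ?_
        have := hK₁ k hK11 j hkj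
        calc dist (c.Phi hkj (x.seq k)) (x.seq j) ≤ min (ω/2) 1 := this
          _ < ω := lt_of_le_of_lt (min_le_left _ _) (by linarith)
      have t3 : dist (x.seq j * c.Phi hkj (y.seq k)) (x.seq j * y.seq j) ≤ ε/3 := by
        rw [c.left _ (x.seq j) _ _]
        exact hK₂ k hK21 j hkj
      calc dist (c.Phi hkj (x.seq k * y.seq k)) (x.seq j * y.seq j)
          ≤ dist (c.Phi hkj (x.seq k * y.seq k)) (c.Phi hkj (x.seq k) * c.Phi hkj (y.seq k)) +
            dist (c.Phi hkj (x.seq k) * c.Phi hkj (y.seq k)) (x.seq j * c.Phi hkj (y.seq k)) +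
            dist (x.seq j * c.Phi hkj (y.seq k)) (x.seq j * y.seq j) :=
            dist_triangle4 _ _ _ _
        _ ≤ ε := by linarith }⟩

@[simp] lemma mul_seq (x y : Lim c) (k : ℕ) : (x * y).seq k = x.seq k * y.seq k := rfl

instance : Inv (Lim c) := ⟨fun x =>
  { seq := fun k => (x.seq k)⁻¹
    bdd := by
      obtain ⟨C, hC⟩ := x.bdd
      exact ⟨C, hC.mono fun k hk => by rwa [linv_dist_inv (c.left _)]⟩
    coh := by
      intro ε hε
      obtain ⟨ω, hω, Nv, hv⟩ := c.equi (ε/2) (by linarith)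
      obtain ⟨C, hC0, hCev⟩ := x.bdd'
      obtain ⟨Kb, hKb⟩ := eventually_atTop.1 hCev
      obtain ⟨Kc, hKc⟩ := cap_exists (2 * C + 4)
      obtain ⟨Ke, hKe⟩ := esc_small (show 0 < ε/8 by linarith)
      obtain ⟨K₁, hK₁⟩ := x.coh (min (ω/2) 1) (by positivity)
      refine ⟨max (max Kb Kc) (max (max K₁ Ke) Nv), fun k hk j hkj => ?_⟩
      simp only [ge_iff_le, max_le_iff] at hk
      obtain ⟨⟨hKb1, hKc1⟩, ⟨hK11, hKe1⟩, hNv1⟩ := hk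
      have hxk : dist (x.seq k) 1 ≤ C := hKb k hKb1
      have hM4 := c.M4 hkj (g := x.seq k) (by nlinarith [hKc k hKc1])
      have hEk : Esc k ≤ ε/8 := hKe k hKe1
      have hEj : 0 < Esc j := Esc_pos j
      have t2 : dist (c.Phi hkj (x.seq k))⁻¹ ((x.seq j))⁻¹ < ε/2 := by
        refine hv (c.n j) (le_trans (le_trans hNv1 hkj) (c.mono.le_apply)) _ _ ?_
        have := hK₁ k hK11 j hkj
        calc dist (c.Phi hkj (x.seq k)) (x.seq j) ≤ min (ω/2) 1 := this
          _ < ω := lt_of_le_of_lt (min_le_left _ _) (by linarith)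
      calc dist (c.Phi hkj (x.seq k)⁻¹) (x.seq j)⁻¹
          ≤ dist (c.Phi hkj (x.seq k)⁻¹) (c.Phi hkj (x.seq k))⁻¹ +
            dist (c.Phi hkj (x.seq k))⁻¹ (x.seq j)⁻¹ := dist_triangle _ _ _
        _ ≤ ε := by linarith }⟩

@[simp] lemma inv_seq (x : Lim c) (k : ℕ) : (x⁻¹).seq k = (x.seq k)⁻¹ := rfl

instance : Group (Lim c) where
  mul_assoc a b d := by ext k; exact mul_assoc _ _ _
  one_mul a := by ext k; exact one_mul _
  mul_one a := by ext k; exact mul_one _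
  inv_mul_cancel a := by ext k; exact inv_mul_cancel _

end Lim

end LimSection

section DistSection

variable {G : ℕ → Type} [∀ n, Group (G n)] [∀ n, MetricSpace (G n)] {c : Pack G}

namespace Lim

lemma dist_cauchySeq (x y : Lim c) : CauchySeq (fun k => dist (x.seq k) (y.seq k)) := by
  rw [Metric.cauchySeq_iff]
  intro ε hε
  obtain ⟨C, hC0, hCev⟩ := x.bdd'
  obtain ⟨C', hC0', hCev'⟩ := y.bdd'
  obtain ⟨Kb, hKb⟩ := eventually_atTop.1 hCev
  obtain ⟨Kb', hKb'⟩ := eventually_atTop.1 hCev'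
  obtain ⟨Kc, hKc⟩ := cap_exists (max C C' + 2)
  obtain ⟨Ke, hKe⟩ := esc_small (show 0 < ε/16 by linarith)
  obtain ⟨K₁, hK₁⟩ := x.coh (ε/8) (by linarith)
  obtain ⟨K₂, hK₂⟩ := y.coh (ε/8) (by linarith)
  set K := max (max (max Kb Kb') Kc) (max (max K₁ K₂) Ke) with hK
  have main : ∀ k, K ≤ k → ∀ j, k ≤ j →
      |dist (x.seq j) (y.seq j) - dist (x.seq k) (y.seq k)| < ε := by
    intro k hk j hkj
    simp only [hK, max_le_iff] at hk
    obtain ⟨⟨⟨hKb1, hKb1'⟩, hKc1⟩, ⟨hK11, hK21⟩, hKe1⟩ := hk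
    have hxk : dist (x.seq k) 1 ≤ C := hKb k hKb1
    have hyk : dist (y.seq k) 1 ≤ C' := hKb' k hKb1'
    have hcap := hKc k hKc1
    have hM2 := c.M2 hkj (g := x.seq k) (g' := y.seq k)
      (by have := le_max_left C C'; linarith)
      (by have := le_max_right C C'; linarith)
    have h1 := hK₁ k hK11 j hkj
    have h2 := hK₂ k hK21 j hkj
    have hd : dist (dist (x.seq j) (y.seq j))
        (dist (c.Phi hkj (x.seq k)) (c.Phi hkj (y.seq k))) ≤
        dist (x.seq j) (c.Phi hkj (x.seq k)) + dist (y.seq j) (c.Phi hkj (y.seq k)) :=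
      dist_dist_dist_le _ _ _ _
    rw [Real.dist_eq] at hd
    rw [dist_comm (x.seq j) _, dist_comm (y.seq j) _] at hd
    have hEk : Esc k ≤ ε/16 := hKe k hKe1
    have hEj : 0 < Esc j := Esc_pos j
    have habs := abs_le.1 hM2
    have habs' := abs_le.1 hd
    have h1' : dist (x.seq j) (c.Phi hkj (x.seq k)) ≤ ε/8 := by
      rw [dist_comm]; exact h1
    have h2' : dist (y.seq j) (c.Phi hkj (y.seq k)) ≤ ε/8 := by
      rw [dist_comm]; exact h2
    rw [abs_lt]
    constructor <;> linarith [habs.1, habs.2, habs'.1, habs'.2]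
  refine ⟨K, fun m hm n hn => ?_⟩
  rcases le_total m n with h | h
  · have := main m hm n h; rw [Real.dist_eq, abs_sub_comm]; exact this
  · have := main n hn m h; rw [Real.dist_eq]; exact this

noncomputable instance : PseudoMetricSpace (Lim c) where
  dist x y := (cauchySeq_tendsto_of_complete (dist_cauchySeq x y)).choose
  dist_self x := by
    have h := (cauchySeq_tendsto_of_complete (dist_cauchySeq x x)).choose_spec
    simpa using tendsto_nhds_unique h (by simpa using (tendsto_const_nhds :
      Tendsto (fun _ : ℕ => (0:ℝ)) atTop (nhds 0)))
  dist_comm x y := by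
    have h1 := (cauchySeq_tendsto_of_complete (dist_cauchySeq x y)).choose_spec
    have h2 := (cauchySeq_tendsto_of_complete (dist_cauchySeq y x)).choose_spec
    refine tendsto_nhds_unique h1 ?_
    simpa [dist_comm] using h2
  dist_triangle x y z := by
    have h1 := (cauchySeq_tendsto_of_complete (dist_cauchySeq x z)).choose_spec
    have h2 := (cauchySeq_tendsto_of_complete (dist_cauchySeq x y)).choose_spec
    have h3 := (cauchySeq_tendsto_of_complete (dist_cauchySeq y z)).choose_spec
    exact le_of_tendsto_of_tendsto' h1 (h2.add h3) (fun k => dist_triangle _ _ _)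

lemma tendsto_dist (x y : Lim c) :
    Tendsto (fun k => dist (x.seq k) (y.seq k)) atTop (nhds (dist x y)) :=
  (cauchySeq_tendsto_of_complete (dist_cauchySeq x y)).choose_spec

/-- Left invariance of the limit distance. -/
lemma dist_left_inv (g x y : Lim c) : dist (g * x) (g * y) = dist x y := by
  refine tendsto_nhds_unique (tendsto_dist (g*x) (g*y)) ?_
  have : (fun k => dist ((g*x).seq k) ((g*y).seq k)) =
      fun k => dist (x.seq k) (y.seq k) := by
    funext k
    simp only [mul_seq]
    exact c.left _ _ _ _
  rw [this]
  exact tendsto_dist x y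

/-- upper bound for limit distances from eventual pointwise bounds. -/
lemma dist_le_of_eventually {x y : Lim c} {b : ℝ}
    (h : ∀ᶠ k in atTop, dist (x.seq k) (y.seq k) ≤ b) : dist x y ≤ b :=
  le_of_tendsto (tendsto_dist x y) h

/-- uniform continuity of inverse in the limit. -/
lemma equi_lim {ε : ℝ} (hε : 0 < ε) : ∃ ω : ℝ, 0 < ω ∧ ∀ x y : Lim c,
    dist x y < ω → dist x⁻¹ y⁻¹ ≤ ε := by
  obtain ⟨ω, hω, N, hN⟩ := c.equi ε hε
  refine ⟨ω, hω, fun x y hxy => ?_⟩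
  refine dist_le_of_eventually ?_
  have hev : ∀ᶠ k in atTop, dist (x.seq k) (y.seq k) < ω :=
    (tendsto_dist x y).eventually (Filter.Tendsto.eventually_lt_const hxy tendsto_id)
  filter_upwards [hev, eventually_ge_atTop N] with k h1 h2
  simp only [inv_seq]
  exact (hN (c.n k) (le_trans h2 (c.mono.le_apply)) _ _ h1).le

/-- uniform continuity of right translations in the limit. -/
lemma equi_right_lim {ε : ℝ} (hε : 0 < ε) : ∃ ω : ℝ, 0 < ω ∧ ∀ x y z : Lim c,
    dist x y < ω → dist (x * z) (y * z) ≤ ε := by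
  obtain ⟨ω, hω, N, hN⟩ := c.equi_right hε
  refine ⟨ω, hω, fun x y z hxy => ?_⟩
  refine dist_le_of_eventually ?_
  have hev : ∀ᶠ k in atTop, dist (x.seq k) (y.seq k) < ω :=
    (tendsto_dist x y).eventually (Filter.Tendsto.eventually_lt_const hxy tendsto_id)
  filter_upwards [hev, eventually_ge_atTop N] with k h1 h2
  simp only [mul_seq]
  exact (hN (c.n k) (le_trans h2 (c.mono.le_apply)) _ _ _ h1).le

instance : ContinuousMul (Lim c) := by
  constructor
  · -- continuous mul
    rw [Metric.continuous_iff]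
    rintro ⟨x, y⟩ ε hε
    obtain ⟨ω, hω, hright⟩ := equi_right_lim (c := c) (show 0 < ε/4 by linarith)
    refine ⟨min (ε/4) ω, by positivity, ?_⟩
    rintro ⟨a, b⟩ hab
    rw [Prod.dist_eq] at hab
    have h1 : dist a x < min (ε/4) ω := lt_of_le_of_lt (le_max_left _ _) hab
    have h2 : dist b y < min (ε/4) ω := lt_of_le_of_lt (le_max_right _ _) hab
    calc dist (a * b) (x * y) ≤ dist (a * b) (a * y) + dist (a * y) (x * y) :=
          dist_triangle _ _ _
      _ ≤ dist b y + ε/4 := by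
          rw [dist_left_inv]
          have := hright a x y (lt_of_lt_of_le h1 (min_le_right _ _))
          linarith
      _ < ε := by
          have := lt_of_lt_of_le h2 (min_le_left _ _)
          linarith
instance : ContinuousInv (Lim c) := by
  constructor
  · -- continuous inv
    rw [Metric.continuous_iff]
    intro x ε hε
    obtain ⟨ω, hω, hinv⟩ := equi_lim (c := c) (show 0 < ε/2 by linarith)
    refine ⟨ω, hω, fun a ha => ?_⟩
    have := hinv a x ha
    linarith

instance : IsTopologicalGroup (Lim c) := ⟨⟩

end Lim

end DistSection

section IotaSection

variable {G : ℕ → Type} [∀ n, Group (G n)] [∀ n, MetricSpace (G n)] {c : Pack G}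

namespace Lim

lemma two_le_two_pow (k : ℕ) : (2:ℝ) ≤ 2^(k+1) := by
  calc (2:ℝ) = 2^1 := (pow_one 2).symm
    _ ≤ 2^(k+1) := pow_le_pow_right₀ one_le_two (by omega)

/-- embedding of `G (c.n k)` into the limit group, with a cutoff outside a large ball. -/
noncomputable def iota (c : Pack G) (k : ℕ) (g : G (c.n k)) : Lim c :=
  if hg : dist g 1 + 2 ≤ (2:ℝ)^(k+1) then
    { seq := fun j => if h : k ≤ j then c.Phi h g else 1
      bdd := by
        refine ⟨dist g 1 + 1, ?_⟩
        filter_upwards [eventually_ge_atTop k] with j hj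
        rw [dif_pos hj]
        have := c.M1 hj hg
        have h1 : 0 < Esc j := Esc_pos j
        have h2 : Esc k ≤ 1 := Esc_le_one k
        linarith
      coh := by
        intro ε hε
        refine ⟨k, fun k' hk' j hk'j => ?_⟩
        simp only [dif_pos hk', dif_pos (le_trans hk' hk'j), ← c.Phi_trans hk' hk'j]
        simp [hε.le] }
  else 1

lemma iota_seq {k : ℕ} {g : G (c.n k)} (hg : dist g 1 + 2 ≤ (2:ℝ)^(k+1))
    {j : ℕ} (h : k ≤ j) : (iota c k g).seq j = c.Phi h g := by
  rw [iota, dif_pos hg]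
  exact dif_pos h

lemma iota_one (k : ℕ) : iota c k (1 : G (c.n k)) = 1 := by
  have hg : dist (1 : G (c.n k)) 1 + 2 ≤ (2:ℝ)^(k+1) := by
    simp [two_le_two_pow k]
  ext j
  rcases le_or_gt k j with h | h
  · rw [iota_seq hg h, c.Phi_one, one_seq]
  · rw [iota, dif_pos hg, one_seq]
    exact dif_neg (by omega)

lemma dist_iota {k : ℕ} {g g' : G (c.n k)} (hg : dist g 1 + 2 ≤ (2:ℝ)^(k+1))
    (hg' : dist g' 1 + 2 ≤ (2:ℝ)^(k+1)) :
    |dist (iota c k g) (iota c k g') - dist g g'| ≤ 2 * Esc k := by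
  have h1 := tendsto_dist (iota c k g) (iota c k g')
  have h2 : Tendsto (fun j => |dist ((iota c k g).seq j) ((iota c k g').seq j) - dist g g'|)
      atTop (nhds |dist (iota c k g) (iota c k g') - dist g g'|) :=
    (h1.sub tendsto_const_nhds).abs
  refine le_of_tendsto h2 ?_
  filter_upwards [eventually_ge_atTop k] with j hj
  rw [iota_seq hg hj, iota_seq hg' hj]
  have := c.M2 hj hg hg'
  have h3 : 0 < Esc j := Esc_pos j
  have h4 := abs_le.1 this
  rw [abs_le]
  constructor <;> linarith [h4.1, h4.2]

lemma iota_norm {k : ℕ} {g : G (c.n k)} (hg : dist g 1 + 2 ≤ (2:ℝ)^(k+1)) :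
    |dist (iota c k g) 1 - dist g 1| ≤ 2 * Esc k := by
  have h0 : dist (1 : G (c.n k)) 1 + 2 ≤ (2:ℝ)^(k+1) := by simp [two_le_two_pow k]
  have := dist_iota hg h0
  rwa [iota_one] at this

lemma iota_mul {k : ℕ} {g g' : G (c.n k)} {q : ℝ} (hg : dist g 1 ≤ q)
    (hg' : dist g' 1 ≤ q) (hq : 2*q + 4 ≤ (2:ℝ)^(k+1)) :
    dist (iota c k (g * g')) (iota c k g * iota c k g') ≤ 4 * Esc k := by
  have hq0 : 0 ≤ q := le_trans dist_nonneg hg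
  have hgg' : dist (g * g') 1 + 2 ≤ (2:ℝ)^(k+1) := by
    have := linv_norm_mul (c.left _) g g'; linarith
  have hgc : dist g 1 + 2 ≤ (2:ℝ)^(k+1) := by linarith
  have hgc' : dist g' 1 + 2 ≤ (2:ℝ)^(k+1) := by linarith
  refine dist_le_of_eventually ?_
  filter_upwards [eventually_ge_atTop k] with j hj
  rw [mul_seq, iota_seq hgg' hj, iota_seq hgc hj, iota_seq hgc' hj]
  have := c.M3 hj hg hg' hq
  have h3 : 0 < Esc j := Esc_pos j
  linarith

lemma exists_approx (x : Lim c) {R : ℝ} (hR : dist x 1 ≤ R) (k : ℕ)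
    (hcap : R + 7 ≤ (2:ℝ)^(k+1)) :
    ∃ w : G (c.n k), dist w 1 ≤ R + 2 ∧ dist x (iota c k w) ≤ 9 * Esc k := by
  have hR0 : (0:ℝ) ≤ R := le_trans dist_nonneg hR
  have hcap2 : (2:ℝ) ≤ 2^(k+1) := two_le_two_pow k
  -- eventually the components have norm ≤ R + 1
  have hnorm : ∀ᶠ j in atTop, dist (x.seq j) 1 ≤ R + 1 := by
    have h1 := tendsto_dist x 1
    have h2 : dist x 1 < R + 1 := by linarith
    filter_upwards [h1.eventually_lt_const h2] with j hj
    calc dist (x.seq j) 1 = dist (x.seq j) ((1 : Lim c).seq j) := by rw [one_seq]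
      _ ≤ R + 1 := hj.le
  obtain ⟨Kn, hKn⟩ := eventually_atTop.1 hnorm
  obtain ⟨K₀, hK₀⟩ := x.coh (Esc k) (Esc_pos k)
  set k' := max k (max K₀ Kn) with hk'
  have hkk' : k ≤ k' := le_max_left _ _
  have hK₀k' : K₀ ≤ k' := le_trans (le_max_left _ _) (le_max_right _ _)
  have hKnk' : Kn ≤ k' := le_trans (le_max_right _ _) (le_max_right _ _)
  have hxk' : dist (x.seq k') 1 ≤ R + 1 := hKn k' hKnk'
  have hEk : 0 < Esc k := Esc_pos k
  have hEk' : 0 < Esc k' := Esc_pos k'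
  have hEkk' : Esc k' ≤ Esc k := Esc_antitone hkk'
  have hEk1 : Esc k ≤ 1 := Esc_le_one k
  -- the approximating element
  refine ⟨c.Tau hkk' (x.seq k'), ?_, ?_⟩
  · have := c.M6 hkk' (g := x.seq k') (by linarith)
    linarith
  · have hw : dist (c.Tau hkk' (x.seq k')) 1 ≤ R + 2 := by
      have := c.M6 hkk' (g := x.seq k') (by linarith)
      linarith
    have hwc : dist (c.Tau hkk' (x.seq k')) 1 + 2 ≤ (2:ℝ)^(k+1) := by linarith
    refine dist_le_of_eventually ?_
    filter_upwards [eventually_ge_atTop k'] with j hj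
    have hkj : k ≤ j := le_trans hkk' hj
    rw [iota_seq hwc hkj]
    have htrans : c.Phi hkj (c.Tau hkk' (x.seq k')) =
        c.Phi hj (c.Phi hkk' (c.Tau hkk' (x.seq k'))) := c.Phi_trans hkk' hj _
    rw [htrans]
    have t1 : dist (c.Phi hj (x.seq k')) (x.seq j) ≤ Esc k := hK₀ k' hK₀k' j hj
    have hM5 : dist (c.Phi hkk' (c.Tau hkk' (x.seq k'))) (x.seq k') ≤ 6 * Esc k := by
      have := c.M5 hkk' (g := x.seq k') (by linarith)
      have : dist (c.Phi hkk' (c.Tau hkk' (x.seq k'))) (x.seq k') ≤ 6 * (Esc k - Esc k') :=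
        this
      linarith
    have hM1T : dist (c.Phi hkk' (c.Tau hkk' (x.seq k'))) 1 ≤ R + 3 := by
      have := c.M1 hkk' (g := c.Tau hkk' (x.seq k')) (by linarith)
      linarith
    have hM2 := c.M2 hj (g := x.seq k') (g' := c.Phi hkk' (c.Tau hkk' (x.seq k')))
      (by -- cap at k' : R + 3 ≤ 2^(k'+1)
        have := Pack.two_pow_le hkk'; linarith)
      (by have := Pack.two_pow_le hkk'; linarith)
    have habs := abs_le.1 hM2
    calc dist (x.seq j) (c.Phi hj (c.Phi hkk' (c.Tau hkk' (x.seq k'))))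
        ≤ dist (x.seq j) (c.Phi hj (x.seq k')) +
          dist (c.Phi hj (x.seq k')) (c.Phi hj (c.Phi hkk' (c.Tau hkk' (x.seq k')))) :=
          dist_triangle _ _ _
      _ ≤ 9 * Esc k := by
          rw [dist_comm (x.seq j) _]
          have hd : dist (c.Phi hj (x.seq k'))
              (c.Phi hj (c.Phi hkk' (c.Tau hkk' (x.seq k')))) ≤
              dist (x.seq k') (c.Phi hkk' (c.Tau hkk' (x.seq k'))) + 2 * Esc k' := by
            have h5 : 0 < Esc j := Esc_pos j
            linarith [habs.2]
          rw [dist_comm (x.seq k') _] at hd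
          linarith

lemma iota_dense (x : Lim c) {δ : ℝ} (hδ : 0 < δ) :
    ∃ K, ∀ k, K ≤ k → dist x (iota c k (x.seq k)) ≤ δ := by
  obtain ⟨C, hC0, hCev⟩ := x.bdd'
  obtain ⟨Kb, hKb⟩ := eventually_atTop.1 hCev
  obtain ⟨Kc, hKc⟩ := cap_exists (C + 2)
  obtain ⟨K₀, hK₀⟩ := x.coh δ hδ
  refine ⟨max (max Kb Kc) K₀, fun k hk => ?_⟩
  simp only [max_le_iff] at hk
  obtain ⟨⟨hk1, hk2⟩, hk3⟩ := hk
  have hxk : dist (x.seq k) 1 + 2 ≤ (2:ℝ)^(k+1) := by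
    have := hKb k hk1; have := hKc k hk2; linarith
  refine dist_le_of_eventually ?_
  filter_upwards [eventually_ge_atTop k] with j hj
  rw [iota_seq hxk hj, dist_comm]
  exact hK₀ k hk3 j hj

end Lim

end IotaSection

section CompleteSection

variable {G : ℕ → Type} [∀ n, Group (G n)] [∀ n, MetricSpace (G n)] {c : Pack G}

namespace Lim

lemma Esc_zero : Esc 0 = 1 := by simp [Esc]

instance : CompleteSpace (Lim c) := by
  apply Metric.complete_of_convergent_controlled_sequences Esc Esc_pos
  intro u hu
  -- a common norm bound
  set C : ℝ := dist (u 0) 1 + 1 with hCdef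
  have hC0 : 0 ≤ C := by positivity
  have hC : ∀ i, dist (u i) 1 ≤ C := by
    intro i
    have h1 : dist (u i) (u 0) < Esc 0 := hu 0 i 0 (Nat.zero_le _) le_rfl
    rw [Esc_zero] at h1
    calc dist (u i) 1 ≤ dist (u i) (u 0) + dist (u 0) 1 := dist_triangle _ _ _
      _ ≤ C := by rw [hCdef]; linarith
  -- thresholds
  have hKdense : ∀ i : ℕ, ∃ K, ∀ k, K ≤ k →
      dist (u i) (iota c k ((u i).seq k)) ≤ Esc i := fun i => iota_dense (u i) (Esc_pos i)
  choose Kdense hKdenseS using hKdense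
  have hKnorm : ∀ i : ℕ, ∃ K, ∀ j, K ≤ j → dist ((u i).seq j) 1 ≤ C + 1 := by
    intro i
    have h1 := tendsto_dist (u i) (1 : Lim c)
    have h2 : dist (u i) 1 < C + 1 := lt_of_le_of_lt (hC i) (by linarith)
    have := eventually_atTop.1 (h1.eventually_lt_const h2)
    obtain ⟨K, hK⟩ := this
    exact ⟨K, fun j hj => by
      have := hK j hj
      calc dist ((u i).seq j) 1 = dist ((u i).seq j) ((1 : Lim c).seq j) := by rw [one_seq]
        _ ≤ C + 1 := this.le⟩
  choose Knorm hKnormS using hKnorm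
  obtain ⟨Kcap, hKcap⟩ := cap_exists (2*C + 10)
  set Kd : ℕ → ℕ := fun i => max (Kdense i) (max (Knorm i) Kcap) with hKd
  -- the diagonal levels
  set m : ℕ → ℕ := fun i => Nat.rec (Kd 0) (fun i ih => max (ih + 1) (Kd (i+1))) i with hm
  have hmKd : ∀ i, Kd i ≤ m i := by
    intro i; cases i with
    | zero => exact le_rfl
    | succ i => exact le_max_right _ _
  have hmS : StrictMono m :=
    strictMono_nat_of_lt_succ (fun i => lt_of_lt_of_le (Nat.lt_succ_self _) (le_max_left _ _))
  have hmge : ∀ i, i ≤ m i := fun i => hmS.le_apply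
  set g : ∀ i, G (c.n (m i)) := fun i => (u i).seq (m i) with hg
  set v : ℕ → Lim c := fun i => iota c (m i) (g i) with hv
  have hcap : ∀ i, 2*C + 10 ≤ (2:ℝ)^(m i + 1) :=
    fun i => hKcap _ (le_trans (le_trans (le_max_right _ _) (le_max_right _ _)) (hmKd i))
  have hgn : ∀ i, dist (g i) 1 ≤ C + 1 :=
    fun i => hKnormS i (m i) (le_trans (le_trans (le_max_left _ _) (le_max_right _ _)) (hmKd i))
  have hgcap : ∀ i, dist (g i) 1 + 2 ≤ (2:ℝ)^(m i + 1) := by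
    intro i; have := hgn i; have := hcap i; linarith
  have hseq : ∀ i j, (h : m i ≤ j) → (v i).seq j = c.Phi h (g i) :=
    fun i j h => iota_seq (hgcap i) h
  have hvu : ∀ i, dist (u i) (v i) ≤ Esc i :=
    fun i => hKdenseS i (m i) (le_trans (le_max_left _ _) (hmKd i))
  have hvv : ∀ b, dist (v b) (v (b+1)) ≤ 3 * Esc b := by
    intro b
    have h1 := hvu b
    have h2 : dist (u b) (u (b+1)) < Esc b := hu b b (b+1) le_rfl (by omega)
    have h3 := hvu (b+1)
    have h4 : Esc (b+1) ≤ Esc b := Esc_antitone (by omega)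
    calc dist (v b) (v (b+1)) ≤ dist (v b) (u b) + dist (u b) (u (b+1)) +
          dist (u (b+1)) (v (b+1)) := dist_triangle4 _ _ _ _
      _ ≤ 3 * Esc b := by
          rw [dist_comm (v b) (u b)]
          linarith
  -- pushforward of g b to level m (b+1)
  have hmb1 : ∀ b, m b ≤ m (b+1) := fun b => (hmS (Nat.lt_succ_self b)).le
  set A : ∀ b, G (c.n (m (b+1))) := fun b => c.Phi (hmb1 b) (g b) with hA
  have hAn : ∀ b, dist (A b) 1 ≤ C + 2 := by
    intro b
    have := c.M1 (hmb1 b) (g := g b) (hgcap b)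
    have h1 : 0 < Esc (m (b+1)) := Esc_pos _
    have h2 : Esc (m b) ≤ 1 := Esc_le_one _
    have := hgn b
    linarith
  have hAcap : ∀ b, dist (A b) 1 + 2 ≤ (2:ℝ)^(m (b+1) + 1) := by
    intro b; have := hAn b; have := hcap (b+1); linarith
  have hzero : ∀ b, dist (iota c (m (b+1)) (A b)) (v b) = 0 := by
    intro b
    refine le_antisymm (dist_le_of_eventually ?_) dist_nonneg
    filter_upwards [eventually_ge_atTop (m (b+1))] with j hj
    have hbj : m b ≤ j := le_trans (hmb1 b) hj
    rw [iota_seq (hAcap b) hj, hseq b j hbj, hA]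
    simp only
    rw [c.Phi_trans (hmb1 b) hj]
    simp
  have hstep : ∀ b j, m (b+1) ≤ j → dist ((v b).seq j) ((v (b+1)).seq j) ≤ 5 * Esc b := by
    intro b j hj
    have hbj : m b ≤ j := le_trans (hmb1 b) hj
    have e1 : (v b).seq j = c.Phi hj (A b) := by
      rw [hseq b j hbj, hA]
      simp only
      rw [c.Phi_trans (hmb1 b) hj]
    have e2 : (v (b+1)).seq j = c.Phi hj (g (b+1)) := hseq (b+1) j hj
    have hg1cap := hgcap (b+1)
    have hM2 := c.M2 hj (g := A b) (g' := g (b+1)) (hAcap b) hg1cap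
    have hdio := dist_iota (c := c) (hAcap b) hg1cap
    have hD : dist (iota c (m (b+1)) (A b)) (iota c (m (b+1)) (g (b+1))) ≤ 3 * Esc b := by
      calc dist (iota c (m (b+1)) (A b)) (iota c (m (b+1)) (g (b+1)))
          ≤ dist (iota c (m (b+1)) (A b)) (v b) + dist (v b) (v (b+1)) := by
            have : v (b+1) = iota c (m (b+1)) (g (b+1)) := rfl
            rw [← this]
            exact dist_triangle _ _ _
        _ ≤ 3 * Esc b := by rw [hzero b]; linarith [hvv b]
    have hEl : Esc (m (b+1)) ≤ Esc (b+1) := Esc_antitone (hmge (b+1))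
    have hEb : Esc (b+1) = Esc b / 2 := Esc_succ b
    have hEj : 0 < Esc j := Esc_pos j
    have habs2 := abs_le.1 hM2
    have habs3 := abs_le.1 hdio
    rw [e1, e2]
    have hEb0 : 0 < Esc b := Esc_pos b
    -- dist (A b) (g (b+1)) ≤ D + 2 Esc l ≤ 3 Esc b + 2 Esc l
    -- dist (Phi A) (Phi g') ≤ dist A g' + 2 Esc l
    linarith [habs2.1, habs2.2, habs3.1, habs3.2]
  have hblock : ∀ a b, a ≤ b → ∀ j, m b ≤ j →
      dist ((v a).seq j) ((v b).seq j) ≤ 10 * (Esc a - Esc b) := by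
    intro a b hab
    induction b, hab using Nat.le_induction with
    | base => intro j _; simp
    | succ b hab ih =>
      intro j hj
      have hbj : m b ≤ j := le_trans (hmb1 b) hj
      have hEb : Esc (b+1) = Esc b / 2 := Esc_succ b
      calc dist ((v a).seq j) ((v (b+1)).seq j)
          ≤ dist ((v a).seq j) ((v b).seq j) + dist ((v b).seq j) ((v (b+1)).seq j) :=
            dist_triangle _ _ _
        _ ≤ 10 * (Esc a - Esc (b+1)) := by linarith [ih j hbj, hstep b j hj]
  -- the index of the block containing j
  set I : ℕ → ℕ := fun j => Nat.findGreatest (fun i => m i ≤ j) j with hI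
  have hij : ∀ j, m 0 ≤ j → m (I j) ≤ j := by
    intro j hj
    exact Nat.findGreatest_spec (P := fun i => m i ≤ j) (Nat.zero_le j) hj
  have hIa : ∀ a j, m a ≤ j → a ≤ I j := by
    intro a j haj
    exact Nat.le_findGreatest (le_trans (hmge a) haj) haj
  -- the limit element
  set y : Lim c := {
    seq := fun j => (v (I j)).seq j
    bdd := by
      refine ⟨C + 2, ?_⟩
      filter_upwards [eventually_ge_atTop (m 0)] with j hj
      have h1 := hij j hj
      rw [hseq (I j) j h1]
      have := c.M1 h1 (g := g (I j)) (hgcap (I j))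
      have h2 : 0 < Esc j := Esc_pos j
      have h3 : Esc (m (I j)) ≤ 1 := Esc_le_one _
      have := hgn (I j)
      linarith
    coh := by
      intro ε hε
      obtain ⟨a, ha⟩ := esc_small (show 0 < ε/10 by linarith)
      refine ⟨m a, fun k hk j hkj => ?_⟩
      have hm0k : m 0 ≤ k := le_trans (hmS.monotone (Nat.zero_le a)) hk
      have hm0j : m 0 ≤ j := le_trans hm0k hkj
      have hp := hij k hm0k
      have hq := hij j hm0j
      have hap : a ≤ I k := hIa a k hk
      have hpq : I k ≤ I j := by
        rw [hI]
        exact Nat.findGreatest_mono (fun i (hi : m i ≤ k) => le_trans hi hkj) hkj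
      have e1 : c.Phi hkj ((v (I k)).seq k) = (v (I k)).seq j := by
        rw [hseq (I k) k hp, hseq (I k) j (le_trans hp hkj), ← c.Phi_trans hp hkj]
      rw [e1]
      have := hblock (I k) (I j) hpq j hq
      have h2 : 0 < Esc (I j) := Esc_pos _
      have h3 : Esc (I k) ≤ Esc a := Esc_antitone hap
      have h4 := ha a le_rfl
      linarith }
  refine ⟨y, ?_⟩
  have hdist : ∀ i, dist (u i) y ≤ 11 * Esc i := by
    intro i
    have h1 : dist (v i) y ≤ 10 * Esc i := by
      refine dist_le_of_eventually ?_
      filter_upwards [eventually_ge_atTop (m i), eventually_ge_atTop (m 0)] with j hj hj0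
      have hq := hij j hj0
      have hiq : i ≤ I j := hIa i j hj
      have : y.seq j = (v (I j)).seq j := rfl
      rw [this]
      have := hblock i (I j) hiq j hq
      have h2 : 0 < Esc (I j) := Esc_pos _
      linarith
    calc dist (u i) y ≤ dist (u i) (v i) + dist (v i) y := dist_triangle _ _ _
      _ ≤ 11 * Esc i := by linarith [hvu i]
  rw [tendsto_iff_dist_tendsto_zero]
  refine squeeze_zero (fun i => dist_nonneg) hdist ?_
  simpa using Esc_tendsto.const_mul (11:ℝ)

end Lim

end CompleteSection

section TBSection

variable {G : ℕ → Type} [∀ n, Group (G n)] [∀ n, MetricSpace (G n)] {c : Pack G}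

namespace Lim

lemma totallyBounded_closedBall (R : ℝ) :
    TotallyBounded (Metric.closedBall (1 : Lim c) R) := by
  rw [Metric.totallyBounded_iff]
  intro ε hε
  obtain ⟨K₁, hK₁⟩ := esc_small (show 0 < ε/40 by linarith)
  obtain ⟨K₂, hK₂⟩ := cap_exists (R + 7)
  set k := max K₁ K₂ with hk
  have hEk : Esc k ≤ ε/40 := hK₁ k (le_max_left _ _)
  have hEk0 : 0 < Esc k := Esc_pos k
  have hcap : R + 7 ≤ (2:ℝ)^(k+1) := hK₂ k (le_max_right _ _)
  -- a finite net in `G (c.n k)`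
  have hproper := c.proper (c.n k)
  have hcomp : IsCompact (Metric.closedBall (1 : G (c.n k)) (R + 2)) :=
    isCompact_closedBall _ _
  have hTB := hcomp.totallyBounded
  obtain ⟨t, htsub, htfin, htcov⟩ :=
    totallyBounded_iff_subset.1 hTB _ (dist_mem_uniformity (show 0 < ε/4 by linarith))
  refine ⟨(iota c k) '' t, htfin.image _, ?_⟩
  intro x hx
  have hxR : dist x 1 ≤ R := mem_closedBall.1 hx
  have hR0 : (0:ℝ) ≤ R := le_trans dist_nonneg hxR
  obtain ⟨w, hw1, hw2⟩ := exists_approx x hxR k hcap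
  have hwB : w ∈ Metric.closedBall (1 : G (c.n k)) (R + 2) := Metric.mem_closedBall.2 hw1
  have hcov := htcov hwB
  simp only [Set.mem_iUnion] at hcov
  obtain ⟨y, hyt, hyw⟩ := hcov
  have hyd : dist y w < ε/4 := by
    have : dist w y < ε/4 := hyw
    rwa [dist_comm] at this
  have hyB : dist y 1 ≤ R + 2 := Metric.mem_closedBall.1 (htsub hyt)
  have hycap : dist y 1 + 2 ≤ (2:ℝ)^(k+1) := by linarith
  have hwcap : dist w 1 + 2 ≤ (2:ℝ)^(k+1) := by linarith
  have hdio := abs_le.1 (dist_iota (c := c) hycap hwcap)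
  refine Set.mem_iUnion.2 ⟨iota c k y, ?_⟩
  simp only [Set.mem_iUnion]
  refine ⟨Set.mem_image_of_mem _ hyt, ?_⟩
  rw [Metric.mem_ball]
  calc dist x (iota c k y) ≤ dist x (iota c k w) + dist (iota c k w) (iota c k y) :=
        dist_triangle _ _ _
    _ < ε := by
        rw [dist_comm (iota c k w) (iota c k y)]
        have h9 : 9 * Esc k ≤ 9 * (ε/40) := by linarith
        have hd2 : dist (iota c k y) (iota c k w) ≤ dist y w + 2 * Esc k := by
          linarith [hdio.2]
        linarith

end Lim

end TBSection

section QuotSection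

open SeparationQuotient

variable {G : ℕ → Type} [∀ n, Group (G n)] [∀ n, MetricSpace (G n)] {c : Pack G}

namespace Lim

lemma isCompact_closedBall_lim (z : Lim c) (r : ℝ) :
    IsCompact (Metric.closedBall z r) := by
  rw [isCompact_iff_totallyBounded_isComplete]
  constructor
  · refine TotallyBounded.subset ?_ (totallyBounded_closedBall (r + dist z 1))
    intro y hy
    rw [Metric.mem_closedBall] at hy ⊢
    calc dist y 1 ≤ dist y z + dist z 1 := dist_triangle _ _ _
      _ ≤ r + dist z 1 := by linarith
  · exact Metric.isClosed_closedBall.isComplete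

lemma HH_left : ∀ g h k : SeparationQuotient (Lim c), dist (g * h) (g * k) = dist h k := by
  intro g h k
  obtain ⟨a, rfl⟩ := surjective_mk g
  obtain ⟨b, rfl⟩ := surjective_mk h
  obtain ⟨d, rfl⟩ := surjective_mk k
  simp only [← SeparationQuotient.mk_mul, SeparationQuotient.dist_mk]
  exact dist_left_inv a b d

lemma HH_right {ε : ℝ} (hε : 0 < ε) : ∃ ω : ℝ, 0 < ω ∧
    ∀ x y z : SeparationQuotient (Lim c), dist x y < ω → dist (x * z) (y * z) ≤ ε := by
  obtain ⟨ω, hω, hr⟩ := equi_right_lim (c := c) hε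
  refine ⟨ω, hω, fun x y z hxy => ?_⟩
  obtain ⟨a, rfl⟩ := surjective_mk x
  obtain ⟨b, rfl⟩ := surjective_mk y
  obtain ⟨d, rfl⟩ := surjective_mk z
  simp only [← SeparationQuotient.mk_mul, SeparationQuotient.dist_mk]
  rw [SeparationQuotient.dist_mk] at hxy
  exact hr a b d hxy

lemma HH_ball_eq (z : Lim c) (r : ℝ) :
    Metric.closedBall (SeparationQuotient.mk z) r =
      SeparationQuotient.mk '' (Metric.closedBall z r) := by
  ext y
  constructor
  · intro hy
    obtain ⟨w, rfl⟩ := surjective_mk y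
    rw [Metric.mem_closedBall, SeparationQuotient.dist_mk] at hy
    exact ⟨w, Metric.mem_closedBall.2 hy, rfl⟩
  · rintro ⟨w, hw, rfl⟩
    rw [Metric.mem_closedBall, SeparationQuotient.dist_mk]
    exact Metric.mem_closedBall.1 hw

instance : ProperSpace (SeparationQuotient (Lim c)) := by
  constructor
  intro x r
  obtain ⟨z, rfl⟩ := surjective_mk x
  rw [HH_ball_eq]
  exact (isCompact_closedBall_lim z r).image SeparationQuotient.continuous_mk

end Lim

end QuotSection

section FinalSection

open SeparationQuotient

variable {G : ℕ → Type} [∀ n, Group (G n)] [∀ n, MetricSpace (G n)]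

set_option maxHeartbeats 2000000 in
lemma upsilon_final (c : Pack G) {ε : ℝ} (hε : 0 < ε) (hε1 : ε ≤ 1) :
    ∃ M : ℕ, ∀ m, M ≤ m →
      Upsilon (G m) (SeparationQuotient (Lim c)) < ε := by
  classical
  set r : ℝ := 2/ε with hrdef
  have hr2 : 2 ≤ r := by
    rw [hrdef, le_div_iff₀ hε]; linarith
  have hr0 : 0 < r := by linarith
  obtain ⟨ω, hω, hrt⟩ := Lim.HH_right (c := c) (show 0 < ε/16 by linarith)
  obtain ⟨K₁, hK₁⟩ := Lim.esc_small (show 0 < min (ε/1000) (ω/10) by positivity)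
  obtain ⟨K₂, hK₂⟩ := Lim.cap_exists (4*r + 40)
  set k : ℕ := max K₁ K₂ with hkdef
  have hEk : Esc k ≤ min (ε/1000) (ω/10) := hK₁ k (le_max_left _ _)
  have hEke : Esc k ≤ ε/1000 := le_trans hEk (min_le_left _ _)
  have hEkw : Esc k ≤ ω/10 := le_trans hEk (min_le_right _ _)
  have hEk0 : 0 < Esc k := Esc_pos k
  have hcap : 4*r + 40 ≤ (2:ℝ)^(k+1) := hK₂ k (le_max_right _ _)
  set θ : ℝ := 9 * Esc k with hθdef
  have hθω : θ < ω := by rw [hθdef]; linarith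
  have hθ0 : 0 ≤ θ := by positivity
  refine ⟨c.n k, fun m hm => ?_⟩
  obtain ⟨e, he0, helt, α, β, hαβ⟩ := c.hub k m hm
  have her : (2:ℝ)^(k+1) ≤ 1/e := by
    have h2 : Esc (k+1) * (2:ℝ)^(k+1) = 1 := Esc_mul_two_pow (k+1)
    rw [le_div_iff₀ he0]
    nlinarith [Esc_pos (k+1), pow_pos (show (0:ℝ) < 2 by norm_num) (k+1)]
  have hre : 4*r + 40 ≤ 1/e := le_trans hcap her
  have hre0 : (0:ℝ) ≤ 1/e := by positivity
  have he1 : e ≤ Esc k := le_trans helt.le (Esc_antitone (by omega))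
  -- the forward map
  set ς : G m → SeparationQuotient (Lim c) := fun g =>
    if dist g 1 ≤ r then SeparationQuotient.mk (Lim.iota c k (α g)) else 1 with hςdef
  -- the backward map
  set Pw : SeparationQuotient (Lim c) → G (c.n k) → Prop := fun x w =>
    dist w 1 ≤ r + 4 ∧ dist x (SeparationQuotient.mk (Lim.iota c k w)) ≤ θ with hPwdef
  set κ : SeparationQuotient (Lim c) → G m := fun x =>
    if x = 1 then 1 else if hx : ∃ w, Pw x w then β hx.choose else 1 with hκdef
  have hα1 : α 1 = 1 := hαβ.1
  have hβ1 : β 1 = 1 := hαβ.2.1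
  have hς1 : ς 1 = 1 := by
    rw [hςdef]
    simp only [dist_self]
    rw [if_pos (by linarith : (0:ℝ) ≤ r), hα1, Lim.iota_one, SeparationQuotient.mk_one]
  have hκ1 : κ 1 = 1 := if_pos rfl
  have hςval : ∀ g : G m, dist g 1 ≤ r → ς g = SeparationQuotient.mk (Lim.iota c k (α g)) :=
    fun g hg => if_pos hg
  have hαnorm : ∀ g : G m, dist g 1 ≤ r → dist (α g) 1 ≤ r + 1 := by
    intro g hg
    have := aiso_A2 hαβ hre0 (g := g) (by linarith)
    have : dist (α g) 1 ≤ dist g 1 + e := this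
    have hee : e ≤ 1 := le_trans he1 (Esc_le_one k)
    linarith
  have hκspec : ∀ x, dist x 1 ≤ r → ∃ w, (dist w 1 ≤ r + 4 ∧
      dist x (SeparationQuotient.mk (Lim.iota c k w)) ≤ θ) ∧ κ x = β w := by
    intro x hx
    by_cases hx1 : x = 1
    · refine ⟨1, ⟨by simp; linarith, ?_⟩, by rw [hκdef]; simp [hx1, hβ1]⟩
      rw [hx1, Lim.iota_one, SeparationQuotient.mk_one]
      simp [hθ0]
    · have hex : ∃ w, Pw x w := by
        obtain ⟨z, rfl⟩ := surjective_mk x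
        have hz : dist z 1 ≤ r := by
          rw [show (1 : SeparationQuotient (Lim c)) = SeparationQuotient.mk 1 from
            SeparationQuotient.mk_one.symm, SeparationQuotient.dist_mk] at hx
          exact hx
        obtain ⟨w, hw1, hw2⟩ := Lim.exists_approx z hz k (by linarith)
        refine ⟨w, by linarith, ?_⟩
        rw [SeparationQuotient.dist_mk]
        exact hw2
      refine ⟨hex.choose, hex.choose_spec, ?_⟩
      rw [hκdef]
      simp only [if_neg hx1, dif_pos hex]
  -- the main estimates
  have hmain : IsLocAlmostIsoIso ς κ (ε/2) r := by
    refine ⟨hς1, hκ1, ?_, ?_⟩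
    · -- first clause
      intro g hgb g' hg'b h hhb
      rw [Metric.mem_closedBall] at hgb hg'b hhb
      have ha := hαnorm g hgb
      have ha' := hαnorm g' hg'b
      obtain ⟨w, ⟨hw1, hw2⟩, hκh⟩ := hκspec h hhb
      rw [hςval g hgb, hςval g' hg'b, hκh]
      have haa' : dist (α g * α g') 1 ≤ 2*r + 2 := by
        have := linv_norm_mul (c.left (c.n k)) (α g) (α g'); linarith
      have hacap : dist (α g) 1 + 2 ≤ (2:ℝ)^(k+1) := by linarith
      have hacap' : dist (α g') 1 + 2 ≤ (2:ℝ)^(k+1) := by linarith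
      have haacap : dist (α g * α g') 1 + 2 ≤ (2:ℝ)^(k+1) := by linarith
      have hwcap : dist w 1 + 2 ≤ (2:ℝ)^(k+1) := by linarith
      have hmul : dist (Lim.iota c k (α g * α g')) (Lim.iota c k (α g) * Lim.iota c k (α g'))
          ≤ 4 * Esc k := Lim.iota_mul ha ha' (by linarith)
      have hA01 : |dist (SeparationQuotient.mk (Lim.iota c k (α g)) *
            SeparationQuotient.mk (Lim.iota c k (α g'))) h -
          dist (SeparationQuotient.mk (Lim.iota c k (α g * α g'))) h| ≤ 4 * Esc k := by
        have h1 := abs_dist_sub_le (SeparationQuotient.mk (Lim.iota c k (α g)) *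
          SeparationQuotient.mk (Lim.iota c k (α g')))
          (SeparationQuotient.mk (Lim.iota c k (α g * α g'))) h
        refine le_trans h1 ?_
        rw [← SeparationQuotient.mk_mul, SeparationQuotient.dist_mk, dist_comm]
        exact hmul
      have hA12 : |dist (SeparationQuotient.mk (Lim.iota c k (α g * α g'))) h -
          dist (SeparationQuotient.mk (Lim.iota c k (α g * α g')))
            (SeparationQuotient.mk (Lim.iota c k w))| ≤ θ := by
        have h1 := dist_dist_dist_le_right
          (SeparationQuotient.mk (Lim.iota c k (α g * α g'))) h
          (SeparationQuotient.mk (Lim.iota c k w))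
        rw [Real.dist_eq] at h1
        exact le_trans h1 hw2
      have hA2eq : dist (SeparationQuotient.mk (Lim.iota c k (α g * α g')))
          (SeparationQuotient.mk (Lim.iota c k w)) =
          dist (Lim.iota c k (α g * α g')) (Lim.iota c k w) := SeparationQuotient.dist_mk _ _
      have hA23 : |dist (Lim.iota c k (α g * α g')) (Lim.iota c k w) -
          dist (α g * α g') w| ≤ 2 * Esc k := Lim.dist_iota haacap hwcap
      have hA34 : |dist (α g * α g') w - dist (g * g') (β w)| ≤ e :=
        hαβ.2.2.1 g (Metric.mem_closedBall.2 (by linarith))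
          g' (Metric.mem_closedBall.2 (by linarith))
          w (Metric.mem_closedBall.2 (by linarith))
      rw [abs_le]
      have e1 := abs_le.1 hA01
      have e2 := abs_le.1 hA12
      have e3 := abs_le.1 hA23
      have e4 := abs_le.1 hA34
      rw [hA2eq] at e2
      constructor <;> [linarith [e1.1, e2.1, e3.1, e4.1]; linarith [e1.2, e2.2, e3.2, e4.2]]
    · -- second clause
      intro g hgb g' hg'b h hhb
      rw [Metric.mem_closedBall] at hgb hg'b hhb
      obtain ⟨w₁, ⟨hw11, hw12⟩, hκg⟩ := hκspec g hgb
      obtain ⟨w₂, ⟨hw21, hw22⟩, hκg'⟩ := hκspec g' hg'b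
      rw [hκg, hκg', hςval h hhb]
      have hαh := hαnorm h hhb
      have hw1cap : dist w₁ 1 + 2 ≤ (2:ℝ)^(k+1) := by linarith
      have hw2cap : dist w₂ 1 + 2 ≤ (2:ℝ)^(k+1) := by linarith
      have hww : dist (w₁ * w₂) 1 ≤ 2*r + 8 := by
        have := linv_norm_mul (c.left (c.n k)) w₁ w₂; linarith
      have hwwcap : dist (w₁ * w₂) 1 + 2 ≤ (2:ℝ)^(k+1) := by linarith
      have hαhcap : dist (α h) 1 + 2 ≤ (2:ℝ)^(k+1) := by linarith
      have hB01 : |dist (β w₁ * β w₂) h - dist (w₁ * w₂) (α h)| ≤ e :=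
        hαβ.2.2.2 w₁ (Metric.mem_closedBall.2 (by linarith))
          w₂ (Metric.mem_closedBall.2 (by linarith))
          h (Metric.mem_closedBall.2 (by linarith))
      have hB12 : |dist (Lim.iota c k (w₁ * w₂)) (Lim.iota c k (α h)) -
          dist (w₁ * w₂) (α h)| ≤ 2 * Esc k := Lim.dist_iota hwwcap hαhcap
      have hmulw : dist (Lim.iota c k (w₁ * w₂)) (Lim.iota c k w₁ * Lim.iota c k w₂)
          ≤ 4 * Esc k := Lim.iota_mul hw11 hw21 (by linarith)
      have hB23 : |dist (Lim.iota c k (w₁ * w₂)) (Lim.iota c k (α h)) -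
          dist (Lim.iota c k w₁ * Lim.iota c k w₂) (Lim.iota c k (α h))| ≤ 4 * Esc k := by
        have h1 := abs_dist_sub_le (Lim.iota c k (w₁ * w₂))
          (Lim.iota c k w₁ * Lim.iota c k w₂) (Lim.iota c k (α h))
        exact le_trans h1 hmulw
      have hB3eq : dist (SeparationQuotient.mk (Lim.iota c k w₁) *
            SeparationQuotient.mk (Lim.iota c k w₂))
          (SeparationQuotient.mk (Lim.iota c k (α h))) =
          dist (Lim.iota c k w₁ * Lim.iota c k w₂) (Lim.iota c k (α h)) := by
        rw [← SeparationQuotient.mk_mul, SeparationQuotient.dist_mk]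
      have hB4d : dist (SeparationQuotient.mk (Lim.iota c k w₁) *
            SeparationQuotient.mk (Lim.iota c k w₂)) (g * g') ≤ ε/16 + θ := by
        have hd1 : dist (SeparationQuotient.mk (Lim.iota c k w₁)) g < ω := by
          rw [dist_comm]
          exact lt_of_le_of_lt hw12 hθω
        have t1 := hrt (SeparationQuotient.mk (Lim.iota c k w₁)) g
          (SeparationQuotient.mk (Lim.iota c k w₂)) hd1
        have t2 : dist (g * SeparationQuotient.mk (Lim.iota c k w₂)) (g * g') ≤ θ := by
          rw [Lim.HH_left]
          rw [dist_comm]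
          exact hw22
        calc dist (SeparationQuotient.mk (Lim.iota c k w₁) *
              SeparationQuotient.mk (Lim.iota c k w₂)) (g * g')
            ≤ dist (SeparationQuotient.mk (Lim.iota c k w₁) *
                SeparationQuotient.mk (Lim.iota c k w₂))
                (g * SeparationQuotient.mk (Lim.iota c k w₂)) +
              dist (g * SeparationQuotient.mk (Lim.iota c k w₂)) (g * g') :=
              dist_triangle _ _ _
          _ ≤ ε/16 + θ := add_le_add t1 t2
      have hB34 : |dist (SeparationQuotient.mk (Lim.iota c k w₁) *
            SeparationQuotient.mk (Lim.iota c k w₂))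
            (SeparationQuotient.mk (Lim.iota c k (α h))) -
          dist (g * g') (SeparationQuotient.mk (Lim.iota c k (α h)))| ≤ ε/16 + θ := by
        have h1 := abs_dist_sub_le (SeparationQuotient.mk (Lim.iota c k w₁) *
          SeparationQuotient.mk (Lim.iota c k w₂)) (g * g')
          (SeparationQuotient.mk (Lim.iota c k (α h)))
        exact le_trans h1 hB4d
      rw [abs_le]
      have e1 := abs_le.1 hB01
      have e2 := abs_le.1 hB12
      have e3 := abs_le.1 hB23
      have e4 := abs_le.1 hB34
      rw [hB3eq] at e4
      constructor <;> [linarith [e1.1, e2.1, e3.1, e4.1]; linarith [e1.2, e2.2, e3.2, e4.2]]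
  have hhalf : (0:ℝ) < ε/2 := by linarith
  have hup : Upsilon (G m) (SeparationQuotient (Lim c)) ≤ ε/2 := by
    refine upsilon_le_of_exists hhalf ς κ ?_
    have : 1/(ε/2) = r := by rw [hrdef]; field_simp
    rwa [this]
  linarith

end FinalSection

section TendstoSection

variable {G : ℕ → Type} [∀ n, Group (G n)] [∀ n, MetricSpace (G n)]

lemma upsilon_tendsto (c : Pack G) :
    Filter.Tendsto (fun n => Upsilon (G n) (SeparationQuotient (Lim c)))
      Filter.atTop (nhds 0) := by
  rw [Metric.tendsto_atTop]
  intro ε hε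
  have hε' : 0 < min ε 1 := lt_min hε one_pos
  obtain ⟨M, hM⟩ := upsilon_final c hε' (min_le_right _ _)
  refine ⟨M, fun n hn => ?_⟩
  have h1 := hM n hn
  have h2 : 0 ≤ Upsilon (G n) (SeparationQuotient (Lim c)) := upsilon_nonneg
  rw [Real.dist_eq, sub_zero, abs_of_nonneg h2]
  exact lt_of_lt_of_le h1 (min_le_left _ _)

end TendstoSection

/-- A Cauchy sequence of proper metric groups for the
Gromov-Hausdorff monoid distance `Υ`, whose inverse maps are asymptotically
uniformly equicontinuous, converges for `Υ` to some proper metric group. -/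
theorem upsilon_cauchy_groups_convergence
    (G : ℕ → Type) [∀ n, Group (G n)] [∀ n, MetricSpace (G n)]
    (h_left : ∀ n, ∀ g h k : G n, dist (g * h) (g * k) = dist h k)
    (h_cont : ∀ n, Continuous fun p : G n × G n => p.1 * p.2)
    (h_inv : ∀ n, Continuous fun g : G n => g⁻¹)
    (h_proper : ∀ n, ProperSpace (G n))
    (h_cauchy : ∀ ε : ℝ, 0 < ε → ∃ N : ℕ, ∀ m, N ≤ m → ∀ n, N ≤ n →
      Upsilon (G m) (G n) < ε)
    (h_equi : ∀ ε : ℝ, 0 < ε → ∃ ω : ℝ, 0 < ω ∧ ∃ N : ℕ, ∀ n, N ≤ n →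
      ∀ g h : G n, dist g h < ω → dist g⁻¹ h⁻¹ < ε) :
    ∃ (H : Type) (_ : Group H) (_ : MetricSpace H),
      (∀ g h k : H, dist (g * h) (g * k) = dist h k) ∧
      (Continuous fun p : H × H => p.1 * p.2) ∧
      (Continuous fun g : H => g⁻¹) ∧
      ProperSpace H ∧
      Filter.Tendsto (fun n => Upsilon (G n) H) Filter.atTop (nhds 0) := by
  obtain ⟨c⟩ := exists_pack h_left h_proper h_cauchy h_equi
  exact ⟨SeparationQuotient (Lim c), inferInstance, inferInstance,
    Lim.HH_left, continuous_mul, continuous_inv, inferInstance, upsilon_tendsto c⟩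
end
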